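/- arXiv:1711.05931 — 2 statements merged into one kernel-verified Lean document; each statement's English description precedes it below -/
import Mathlib

section
/- Let k > 4. A triangulation of a convex k-gon is triangle-free (meaning no three of its diagonals form the three sides of a triangle) if and only if it contains exactly two short chords. -/
/-- `d` is a diagonal of the convex `k`-gon with vertices `0, …, k−1` (in cyclic order),
written as an ordered pair `d.1 < d.2` of nonadjacent vertices. -/
def IsDiag (k : ℕ) (d : ℕ × ℕ) : Prop :=
  d.1 < d.2 ∧ d.2 < k ∧ d.2 ≠ d.1 + 1 ∧ ¬(d.1 = 0 ∧ d.2 = k - 1)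

/-- Two diagonals cross (in the interior of the polygon). -/
def Cross (d e : ℕ × ℕ) : Prop :=
  (d.1 < e.1 ∧ e.1 < d.2 ∧ d.2 < e.2) ∨ (e.1 < d.1 ∧ d.1 < e.2 ∧ e.2 < d.2)

/-- `T` is a triangulation of the convex `k`-gon: `k − 3` pairwise noncrossing diagonals. -/
def IsTriangulation (k : ℕ) (T : Finset (ℕ × ℕ)) : Prop :=
  T.card = k - 3 ∧ (∀ d ∈ T, IsDiag k d) ∧ ∀ d ∈ T, ∀ e ∈ T, ¬ Cross d e

/-- `d` is a short chord, i.e. a diagonal of the form `q_{i−1} q_{i+1}` (indices mod `k`). -/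
def IsShort (k : ℕ) (d : ℕ × ℕ) : Prop :=
  d.2 = d.1 + 2 ∨ (d.1 = 0 ∧ d.2 = k - 2) ∨ (d.1 = 1 ∧ d.2 = k - 1)

instance (k : ℕ) (d : ℕ × ℕ) : Decidable (IsShort k d) := by unfold IsShort; infer_instance


/-- No three diagonals of `T` bound a triangle. -/
def TriangleFree (T : Finset (ℕ × ℕ)) : Prop :=
  ¬ ∃ a b c : ℕ, a < b ∧ b < c ∧ (a, b) ∈ T ∧ (b, c) ∈ T ∧ (a, c) ∈ T

/-- Lemma U: bound on the number of noncrossing diagonals inside an interval. -/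
lemma span_bound (k : ℕ) (S : Finset (ℕ × ℕ)) (hd : ∀ d ∈ S, IsDiag k d)
    (hnc : ∀ d ∈ S, ∀ e ∈ S, ¬ Cross d e) :
    ∀ n a b, b - a ≤ n →
      ((S.filter (fun d => a ≤ d.1 ∧ d.2 ≤ b)).card ≤ b - a - 1 ∧
       ((a,b) ∉ S → (S.filter (fun d => a ≤ d.1 ∧ d.2 ≤ b)).card ≤ b - a - 2)) := by
  intro n
  induction n with
  | zero =>
      intro a b hb
      have he : (S.filter (fun d => a ≤ d.1 ∧ d.2 ≤ b)) = ∅ := by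
        apply Finset.filter_eq_empty_iff.2
        intro d hdS hcon
        have := hd d hdS
        unfold IsDiag at this
        omega
      simp [he]
  | succ n ih =>
      intro a b hb
      by_cases hne : ((S.filter (fun d => a ≤ d.1 ∧ d.2 ≤ b)) \ {(a,b)}).Nonempty
      · obtain ⟨m, hm, hmax⟩ := Finset.exists_max_image _ (fun d => d.2 - d.1) hne
        obtain ⟨x, y⟩ := m
        simp only [Finset.mem_sdiff, Finset.mem_filter, Finset.mem_singleton] at hm
        obtain ⟨⟨hmS, hax, hyb⟩, hmne⟩ := hm
        have hdxy := hd _ hmS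
        unfold IsDiag at hdxy
        simp only [ne_eq] at hdxy
        have hxy2 : x + 2 ≤ y := by omega
        have cover : ∀ e ∈ S.filter (fun d => a ≤ d.1 ∧ d.2 ≤ b),
            e = (a,b) ∨ (x ≤ e.1 ∧ e.2 ≤ y) ∨ (a ≤ e.1 ∧ e.2 ≤ x) ∨ (y ≤ e.1 ∧ e.2 ≤ b) := by
          intro e heB
          rw [Finset.mem_filter] at heB
          obtain ⟨heS, hea, heb⟩ := heB
          by_cases hab' : e = (a,b)
          · exact Or.inl hab'
          right
          have hde := hd _ heS
          unfold IsDiag at hde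
          simp only [ne_eq] at hde
          have hsp : e.2 - e.1 ≤ y - x := by
            have := hmax e (Finset.mem_sdiff.2 ⟨Finset.mem_filter.2 ⟨heS, hea, heb⟩, by simpa using hab'⟩)
            simpa using this
          have hnc1 : ¬ Cross e (x,y) := hnc _ heS _ hmS
          have hnc2 : ¬ Cross (x,y) e := hnc _ hmS _ heS
          unfold Cross at hnc1 hnc2
          simp only [not_or, not_and] at hnc1 hnc2
          have hne' : ¬(e.1 = a ∧ e.2 = b) := fun h => hab' (Prod.ext h.1 h.2)
          omega
        have hsub2 : S.filter (fun d => a ≤ d.1 ∧ d.2 ≤ b) ⊆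
            insert (a,b) ((S.filter fun d => x ≤ d.1 ∧ d.2 ≤ y) ∪
              ((S.filter fun d => a ≤ d.1 ∧ d.2 ≤ x) ∪ (S.filter fun d => y ≤ d.1 ∧ d.2 ≤ b))) := by
          intro e heB
          rcases cover e heB with h | h | h | h
          · simp [h]
          · exact Finset.mem_insert_of_mem (Finset.mem_union_left _
              (Finset.mem_filter.2 ⟨(Finset.mem_filter.1 heB).1, h⟩))
          · exact Finset.mem_insert_of_mem (Finset.mem_union_right _ (Finset.mem_union_left _
              (Finset.mem_filter.2 ⟨(Finset.mem_filter.1 heB).1, h⟩)))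
          · exact Finset.mem_insert_of_mem (Finset.mem_union_right _ (Finset.mem_union_right _
              (Finset.mem_filter.2 ⟨(Finset.mem_filter.1 heB).1, h⟩)))
        have hne2 : ¬(x = a ∧ y = b) := fun h => hmne (Prod.ext h.1 h.2)
        have c1 : (S.filter (fun d => x ≤ d.1 ∧ d.2 ≤ y)).card ≤ y - x - 1 :=
          (ih x y (by omega)).1
        have c2 : (S.filter (fun d => a ≤ d.1 ∧ d.2 ≤ x)).card ≤ x - a - 1 :=
          (ih a x (by omega)).1
        have c3 : (S.filter (fun d => y ≤ d.1 ∧ d.2 ≤ b)).card ≤ b - y - 1 :=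
          (ih y b (by omega)).1
        have hcard : (S.filter (fun d => a ≤ d.1 ∧ d.2 ≤ b)).card ≤
            1 + ((y - x - 1) + ((x - a - 1) + (b - y - 1))) := by
          calc (S.filter (fun d => a ≤ d.1 ∧ d.2 ≤ b)).card
              ≤ _ := Finset.card_le_card hsub2
            _ ≤ 1 + ((S.filter fun d => x ≤ d.1 ∧ d.2 ≤ y) ∪
              ((S.filter fun d => a ≤ d.1 ∧ d.2 ≤ x) ∪ (S.filter fun d => y ≤ d.1 ∧ d.2 ≤ b))).card := by
                have := Finset.card_insert_le ((a,b) : ℕ × ℕ) ((S.filter fun d => x ≤ d.1 ∧ d.2 ≤ y) ∪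
                  ((S.filter fun d => a ≤ d.1 ∧ d.2 ≤ x) ∪ (S.filter fun d => y ≤ d.1 ∧ d.2 ≤ b)))
                omega
            _ ≤ _ := by
                have h4 := Finset.card_union_le (S.filter fun d => x ≤ d.1 ∧ d.2 ≤ y)
                  ((S.filter fun d => a ≤ d.1 ∧ d.2 ≤ x) ∪ (S.filter fun d => y ≤ d.1 ∧ d.2 ≤ b))
                have h5 := Finset.card_union_le (S.filter fun d => a ≤ d.1 ∧ d.2 ≤ x)
                  (S.filter fun d => y ≤ d.1 ∧ d.2 ≤ b)
                omega
        constructor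
        · omega
        · intro hab
          have hsub3 : S.filter (fun d => a ≤ d.1 ∧ d.2 ≤ b) ⊆
              ((S.filter fun d => x ≤ d.1 ∧ d.2 ≤ y) ∪
                ((S.filter fun d => a ≤ d.1 ∧ d.2 ≤ x) ∪ (S.filter fun d => y ≤ d.1 ∧ d.2 ≤ b))) := by
            intro e heB
            have heS := (Finset.mem_filter.1 heB).1
            rcases cover e heB with h | h | h | h
            · exact absurd (h ▸ heS) hab
            · exact Finset.mem_union_left _ (Finset.mem_filter.2 ⟨heS, h⟩)
            · exact Finset.mem_union_right _ (Finset.mem_union_left _ (Finset.mem_filter.2 ⟨heS, h⟩))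
            · exact Finset.mem_union_right _ (Finset.mem_union_right _ (Finset.mem_filter.2 ⟨heS, h⟩))
          have hcard2 := Finset.card_le_card hsub3
          have h4 := Finset.card_union_le (S.filter fun d => x ≤ d.1 ∧ d.2 ≤ y)
            ((S.filter fun d => a ≤ d.1 ∧ d.2 ≤ x) ∪ (S.filter fun d => y ≤ d.1 ∧ d.2 ≤ b))
          have h5 := Finset.card_union_le (S.filter fun d => a ≤ d.1 ∧ d.2 ≤ x)
            (S.filter fun d => y ≤ d.1 ∧ d.2 ≤ b)
          omega
      · -- all elements equal (a,b)
        have hsub : (S.filter (fun d => a ≤ d.1 ∧ d.2 ≤ b)) ⊆ {(a,b)} := by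
          intro e he
          by_contra hc
          exact hne ⟨e, Finset.mem_sdiff.2 ⟨he, by simpa using hc⟩⟩
        constructor
        · by_cases hab : (a,b) ∈ S
          · have := hd _ hab
            unfold IsDiag at this
            have := Finset.card_le_card hsub
            simp at this
            omega
          · have : (S.filter (fun d => a ≤ d.1 ∧ d.2 ≤ b)) = ∅ := by
              apply Finset.filter_eq_empty_iff.2
              intro e heS hcon
              have := hsub (Finset.mem_filter.2 ⟨heS, hcon⟩)
              simp at this
              subst this
              exact hab heS
            simp [this]
        · intro hab
          have : (S.filter (fun d => a ≤ d.1 ∧ d.2 ≤ b)) = ∅ := by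
            apply Finset.filter_eq_empty_iff.2
            intro e heS hcon
            have := hsub (Finset.mem_filter.2 ⟨heS, hcon⟩)
            simp at this
            subst this
            exact hab heS
          simp [this]

/-- Global upper bound: at most k-3 pairwise noncrossing diagonals. -/
lemma global_bound (k : ℕ) (hk : 4 < k) (S : Finset (ℕ × ℕ)) (hd : ∀ d ∈ S, IsDiag k d)
    (hnc : ∀ d ∈ S, ∀ e ∈ S, ¬ Cross d e) : S.card ≤ k - 3 := by
  have h0 : (0, k-1) ∉ S := by
    intro h
    have := hd _ h
    unfold IsDiag at this
    omega
  have := (span_bound k S hd hnc (k-1) 0 (k-1) (by omega)).2 h0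
  have hfull : S.filter (fun d => 0 ≤ d.1 ∧ d.2 ≤ k-1) = S := by
    apply Finset.filter_true_of_mem
    intro d hdS
    have := hd _ hdS
    unfold IsDiag at this
    omega
  rw [hfull] at this
  omega

/-- Maximality: any diagonal not in a triangulation is crossed by some member. -/
lemma exists_cross (k : ℕ) (hk : 4 < k) (T : Finset (ℕ × ℕ)) (hT : IsTriangulation k T)
    {e : ℕ × ℕ} (he : IsDiag k e) (heT : e ∉ T) : ∃ d ∈ T, Cross d e := by
  by_contra hcon
  push_neg at hcon
  have hcard : (insert e T).card = k - 3 + 1 := by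
    rw [Finset.card_insert_of_notMem heT, hT.1]
  have hb := global_bound k hk (insert e T) ?_ ?_
  · omega
  · intro d hd
    rcases Finset.mem_insert.1 hd with h | h
    · exact h ▸ he
    · exact hT.2.1 _ h
  · intro d hd f hf
    rcases Finset.mem_insert.1 hd with h | h <;> rcases Finset.mem_insert.1 hf with h' | h'
    · subst h h'
      unfold Cross
      omega
    · subst h
      intro hc
      unfold Cross at hc
      exact hcon _ h' (by unfold Cross; omega)
    · subst h'
      exact hcon _ h
    · exact hT.2.2 _ h _ h'

def Edges (k : ℕ) : Finset (ℕ × ℕ) :=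
  ((Finset.range (k-1)).image fun i => (i, i+1)) ∪ {(0, k-1)}

def Efin (k : ℕ) (T : Finset (ℕ × ℕ)) : Finset (ℕ × ℕ) := T ∪ Edges k

lemma mem_Edges {k : ℕ} {p : ℕ × ℕ} :
    p ∈ Edges k ↔ (p.2 = p.1 + 1 ∧ p.1 < k - 1) ∨ (p.1 = 0 ∧ p.2 = k - 1) := by
  obtain ⟨x, y⟩ := p
  simp only [Edges, Finset.mem_union, Finset.mem_image, Finset.mem_range, Finset.mem_singleton,
    Prod.mk.injEq, Prod.ext_iff]
  constructor
  · rintro (⟨i, hi, h1, h2⟩ | ⟨h1, h2⟩)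
    · left; omega
    · right; omega
  · rintro (⟨h1, h2⟩ | ⟨h1, h2⟩)
    · exact Or.inl ⟨x, by omega, rfl, by omega⟩
    · exact Or.inr ⟨h1, h2⟩

lemma mem_Efin {k : ℕ} {T : Finset (ℕ × ℕ)} {p : ℕ × ℕ} :
    p ∈ Efin k T ↔ p ∈ T ∨ (p.2 = p.1 + 1 ∧ p.1 < k - 1) ∨ (p.1 = 0 ∧ p.2 = k - 1) := by
  rw [Efin, Finset.mem_union, mem_Edges]

lemma Efin_bounds {k : ℕ} {T : Finset (ℕ × ℕ)} (hT : IsTriangulation k T) {p : ℕ × ℕ}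
    (h : p ∈ Efin k T) (hk : 4 < k) : p.1 < p.2 ∧ p.2 < k := by
  rcases mem_Efin.1 h with h | h | h
  · have := hT.2.1 _ h
    unfold IsDiag at this
    omega
  · omega
  · omega

lemma mem_T_of_mem_Efin {k : ℕ} {T : Finset (ℕ × ℕ)} {p : ℕ × ℕ}
    (h : p ∈ Efin k T) (h1 : p.2 ≠ p.1 + 1) (h2 : ¬(p.1 = 0 ∧ p.2 = k - 1)) : p ∈ T := by
  rcases mem_Efin.1 h with h | h | h
  · exact h
  · omega
  · omega

/-- Nothing in T crosses anything in E. -/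
lemma no_cross_E {k : ℕ} {T : Finset (ℕ × ℕ)} (hT : IsTriangulation k T) (hk : 4 < k)
    {d e : ℕ × ℕ} (hd : d ∈ Efin k T) (he : e ∈ T) : ¬ Cross e d := by
  rcases mem_Efin.1 hd with h | h | h
  · exact hT.2.2 _ he _ h
  · have hed := hT.2.1 _ he
    unfold IsDiag at hed
    unfold Cross
    omega
  · have hed := hT.2.1 _ he
    unfold IsDiag at hed
    unfold Cross
    omega

/-- Existence of an apex on the inner side of any element of E with nonempty inside. -/
lemma exists_in_apex {k : ℕ} {T : Finset (ℕ × ℕ)} (hT : IsTriangulation k T) (hk : 4 < k)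
    {a b : ℕ} (hE : (a,b) ∈ Efin k T) (hab : a + 2 ≤ b) :
    ∃ c, a < c ∧ c < b ∧ (a,c) ∈ Efin k T ∧ (c,b) ∈ Efin k T := by
  have hbk : b < k := (Efin_bounds hT hE hk).2
  set S := (Finset.Ioo a b).filter (fun v => (a,v) ∈ Efin k T) with hS
  have hSne : S.Nonempty := by
    refine ⟨a+1, Finset.mem_filter.2 ⟨Finset.mem_Ioo.2 (by omega), ?_⟩⟩
    exact mem_Efin.2 (Or.inr (Or.inl (by simp; omega)))
  obtain ⟨c, hcS, hcmax⟩ := Finset.exists_max_image S id hSne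
  rw [hS, Finset.mem_filter, Finset.mem_Ioo] at hcS
  obtain ⟨⟨hac, hcb⟩, hacE⟩ := hcS
  refine ⟨c, hac, hcb, hacE, ?_⟩
  by_contra hcbE
  have hb2 : c + 2 ≤ b := by
    by_contra h
    have : b = c + 1 := by omega
    exact hcbE (mem_Efin.2 (Or.inr (Or.inl (by simp; omega))))
  have hdiag : IsDiag k (c, b) := by
    unfold IsDiag
    simp only
    omega
  obtain ⟨e, heT, hecr⟩ := exists_cross k hk T hT hdiag (fun h => hcbE (mem_Efin.2 (Or.inl h)))
  have hede := hT.2.1 _ heT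
  unfold IsDiag at hede
  unfold Cross at hecr
  simp only at hecr
  rcases hecr with ⟨h1, h2, h3⟩ | ⟨h1, h2, h3⟩
  · -- e.1 < c < e.2 < b
    rcases lt_trichotomy e.1 a with h | h | h
    · exact no_cross_E hT hk hE heT (Or.inl ⟨by omega, by omega, by omega⟩)
    · -- e = (a, e.2), improves c
      have : e.2 ∈ S := by
        rw [hS, Finset.mem_filter, Finset.mem_Ioo]
        refine ⟨⟨by omega, by omega⟩, ?_⟩
        have : ((a : ℕ), e.2) = e := by
          rw [Prod.ext_iff]
          simp [← h]
        rw [this]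
        exact mem_Efin.2 (Or.inl heT)
      have := hcmax _ this
      simp at this
      omega
    · exact no_cross_E hT hk hacE heT (Or.inr ⟨by omega, by omega, by omega⟩)
  · -- c < e.1 < b < e.2
    exact no_cross_E hT hk hE heT (Or.inr ⟨by omega, by omega, by omega⟩)

/-- Existence of an apex on the outer side of any element of E with nonempty outside. -/
lemma exists_out_apex {k : ℕ} {T : Finset (ℕ × ℕ)} (hT : IsTriangulation k T) (hk : 4 < k)
    {a b : ℕ} (hE : (a,b) ∈ Efin k T) (hno : ¬(a = 0 ∧ b = k - 1)) :
    ∃ c, (c < a ∧ (c,a) ∈ Efin k T ∧ (c,b) ∈ Efin k T) ∨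
         (b < c ∧ c < k ∧ (a,c) ∈ Efin k T ∧ (b,c) ∈ Efin k T) := by
  have hbd := Efin_bounds hT hE hk
  simp only at hbd
  obtain ⟨hab, hbk⟩ := hbd
  set S := (Finset.range k).filter (fun v => (v < a ∧ (v,b) ∈ Efin k T) ∨ (b < v ∧ (b,v) ∈ Efin k T)) with hS
  have hSne : S.Nonempty := by
    by_cases hb1 : b < k - 1
    · refine ⟨b+1, Finset.mem_filter.2 ⟨Finset.mem_range.2 (by omega), Or.inr ⟨by omega, ?_⟩⟩⟩
      exact mem_Efin.2 (Or.inr (Or.inl (by simp; omega)))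
    · refine ⟨0, Finset.mem_filter.2 ⟨Finset.mem_range.2 (by omega), Or.inl ⟨by omega, ?_⟩⟩⟩
      have : b = k - 1 := by omega
      exact mem_Efin.2 (Or.inr (Or.inr (by simp; omega)))
  obtain ⟨c, hcS, hcmax⟩ := Finset.exists_max_image S (fun v => if b < v then v - b else v + k - b) hSne
  rw [hS, Finset.mem_filter, Finset.mem_range] at hcS
  obtain ⟨hck, hcside⟩ := hcS
  refine ⟨c, ?_⟩
  rcases hcside with ⟨hca, hcbE⟩ | ⟨hbc, hbcE⟩
  · -- c is to the left of a
    left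
    refine ⟨hca, ?_, hcbE⟩
    by_contra hcaE
    have ha1 : c + 2 ≤ a := by
      by_contra h
      have : a = c + 1 := by omega
      exact hcaE (mem_Efin.2 (Or.inr (Or.inl (by simp; omega))))
    have hdiag : IsDiag k (c, a) := by
      unfold IsDiag
      simp only
      omega
    obtain ⟨e, heT, hecr⟩ := exists_cross k hk T hT hdiag (fun h => hcaE (mem_Efin.2 (Or.inl h)))
    have hede := hT.2.1 _ heT
    unfold IsDiag at hede
    unfold Cross at hecr
    simp only at hecr
    rcases hecr with ⟨h1, h2, h3⟩ | ⟨h1, h2, h3⟩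
    · -- e.1 < c < e.2 < a
      exact no_cross_E hT hk hcbE heT (Or.inl ⟨by omega, by omega, by omega⟩)
    · -- c < e.1 < a < e.2
      rcases lt_trichotomy e.2 b with h | h | h
      · exact no_cross_E hT hk hE heT (Or.inl ⟨by omega, by omega, by omega⟩)
      · -- e = (e.1, b) with c < e.1 < a : improves c
        have hmem : e.1 ∈ S := by
          rw [hS, Finset.mem_filter, Finset.mem_range]
          refine ⟨by omega, Or.inl ⟨by omega, ?_⟩⟩
          have he' : (e.1, b) = e := by
            rw [Prod.ext_iff]
            simp [h]
          rw [he']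
          exact mem_Efin.2 (Or.inl heT)
        have := hcmax _ hmem
        split_ifs at this <;> omega
      · exact no_cross_E hT hk hcbE heT (Or.inr ⟨by omega, by omega, by omega⟩)
  · -- c is to the right of b
    right
    refine ⟨hbc, hck, ?_, hbcE⟩
    by_contra hacE
    have hd4 : ¬(a = 0 ∧ c = k - 1) := by
      rintro ⟨h1, h2⟩
      exact hacE (mem_Efin.2 (Or.inr (Or.inr (by simp; omega))))
    have hdiag : IsDiag k (a, c) := by
      unfold IsDiag
      simp only
      omega
    obtain ⟨e, heT, hecr⟩ := exists_cross k hk T hT hdiag (fun h => hacE (mem_Efin.2 (Or.inl h)))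
    have hede := hT.2.1 _ heT
    unfold IsDiag at hede
    unfold Cross at hecr
    simp only at hecr
    rcases hecr with ⟨h1, h2, h3⟩ | ⟨h1, h2, h3⟩
    · -- e.1 < a < e.2 < c
      rcases lt_trichotomy e.2 b with h | h | h
      · exact no_cross_E hT hk hE heT (Or.inl ⟨by omega, by omega, by omega⟩)
      · -- e = (e.1, b) with e.1 < a : improves c (wraps)
        have hmem : e.1 ∈ S := by
          rw [hS, Finset.mem_filter, Finset.mem_range]
          refine ⟨by omega, Or.inl ⟨by omega, ?_⟩⟩
          have he' : (e.1, b) = e := by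
            rw [Prod.ext_iff]
            simp [h]
          rw [he']
          exact mem_Efin.2 (Or.inl heT)
        have := hcmax _ hmem
        split_ifs at this <;> omega
      · exact no_cross_E hT hk hbcE heT (Or.inl ⟨by omega, by omega, by omega⟩)
    · -- a < e.1 < c < e.2
      rcases lt_trichotomy e.1 b with h | h | h
      · exact no_cross_E hT hk hE heT (Or.inr ⟨by omega, by omega, by omega⟩)
      · -- e = (b, e.2) with e.2 > c : improves c
        have hmem : e.2 ∈ S := by
          rw [hS, Finset.mem_filter, Finset.mem_range]
          refine ⟨by omega, Or.inr ⟨by omega, ?_⟩⟩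
          have he' : (b, e.2) = e := by
            rw [Prod.ext_iff]
            simp [h]
          rw [he']
          exact mem_Efin.2 (Or.inl heT)
        have := hcmax _ hmem
        split_ifs at this <;> omega
      · exact no_cross_E hT hk hbcE heT (Or.inr ⟨by omega, by omega, by omega⟩)

lemma in_apex_unique {k : ℕ} {T : Finset (ℕ × ℕ)} (hT : IsTriangulation k T) (hk : 4 < k)
    {a b c₁ c₂ : ℕ} (h1 : a < c₁) (h2 : c₁ < b) (h3 : a < c₂) (h4 : c₂ < b)
    (e1 : (a,c₁) ∈ Efin k T) (e2 : (c₁,b) ∈ Efin k T)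
    (e3 : (a,c₂) ∈ Efin k T) (e4 : (c₂,b) ∈ Efin k T) : c₁ = c₂ := by
  rcases lt_trichotomy c₁ c₂ with h | h | h
  · -- (c₁,b) ∈ T crosses (a,c₂) ∈ E
    have hmem : (c₁,b) ∈ T := mem_T_of_mem_Efin e2 (by simp; omega) (by simp; omega)
    exact absurd (Or.inr ⟨h1, h, h4⟩ : Cross (c₁,b) (a,c₂)) (no_cross_E hT hk e3 hmem)
  · exact h
  · have hmem : (c₂,b) ∈ T := mem_T_of_mem_Efin e4 (by simp; omega) (by simp; omega)
    exact absurd (Or.inr ⟨h3, h, h2⟩ : Cross (c₂,b) (a,c₁)) (no_cross_E hT hk e1 hmem)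

lemma out_apex_unique {k : ℕ} {T : Finset (ℕ × ℕ)} (hT : IsTriangulation k T) (hk : 4 < k)
    {a b c₁ c₂ : ℕ} (hab : a < b) (hbk : b < k)
    (hc1 : (c₁ < a ∧ (c₁,a) ∈ Efin k T ∧ (c₁,b) ∈ Efin k T) ∨
           (b < c₁ ∧ c₁ < k ∧ (a,c₁) ∈ Efin k T ∧ (b,c₁) ∈ Efin k T))
    (hc2 : (c₂ < a ∧ (c₂,a) ∈ Efin k T ∧ (c₂,b) ∈ Efin k T) ∨
           (b < c₂ ∧ c₂ < k ∧ (a,c₂) ∈ Efin k T ∧ (b,c₂) ∈ Efin k T)) : c₁ = c₂ := by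
  have key : ∀ x y : ℕ,
      (x < a ∧ (x,a) ∈ Efin k T ∧ (x,b) ∈ Efin k T) →
      (y < a ∧ (y,a) ∈ Efin k T ∧ (y,b) ∈ Efin k T) → x < y → False := by
    intro x y ⟨hx, hxa, hxb⟩ ⟨hy, hya, hyb⟩ hxy
    have hmem : (y,b) ∈ T := mem_T_of_mem_Efin hyb (by simp; omega) (by simp; omega)
    exact absurd (Or.inr ⟨hxy, hy, hab⟩ : Cross (y,b) (x,a)) (no_cross_E hT hk hxa hmem)
  have key2 : ∀ x y : ℕ,
      (b < x ∧ x < k ∧ (a,x) ∈ Efin k T ∧ (b,x) ∈ Efin k T) →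
      (b < y ∧ y < k ∧ (a,y) ∈ Efin k T ∧ (b,y) ∈ Efin k T) → x < y → False := by
    intro x y ⟨hx, hxk, hax, hbx⟩ ⟨hy, hyk, hay, hby⟩ hxy
    have hmem : (b,y) ∈ T := mem_T_of_mem_Efin hby (by simp; omega) (by simp; omega)
    exact absurd (Or.inr ⟨hab, hx, hxy⟩ : Cross (b,y) (a,x)) (no_cross_E hT hk hax hmem)
  have keymix : ∀ x y : ℕ,
      (x < a ∧ (x,a) ∈ Efin k T ∧ (x,b) ∈ Efin k T) →
      (b < y ∧ y < k ∧ (a,y) ∈ Efin k T ∧ (b,y) ∈ Efin k T) → False := by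
    intro x y ⟨hx, hxa, hxb⟩ ⟨hy, hyk, hay, hby⟩
    have hmem : (a,y) ∈ T := mem_T_of_mem_Efin hay (by simp; omega) (by simp; omega)
    exact absurd (Or.inr ⟨hx, hab, hy⟩ : Cross (a,y) (x,b)) (no_cross_E hT hk hxb hmem)
  rcases hc1 with hc1 | hc1 <;> rcases hc2 with hc2 | hc2
  · rcases lt_trichotomy c₁ c₂ with h | h | h
    · exact absurd (key c₁ c₂ hc1 hc2 h) not_false
    · exact h
    · exact absurd (key c₂ c₁ hc2 hc1 h) not_false
  · exact absurd (keymix c₁ c₂ hc1 hc2) not_false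
  · exact absurd (keymix c₂ c₁ hc2 hc1) not_false
  · rcases lt_trichotomy c₁ c₂ with h | h | h
    · exact absurd (key2 c₁ c₂ hc1 hc2 h) not_false
    · exact h
    · exact absurd (key2 c₂ c₁ hc2 hc1 h) not_false

def SideOf (d : ℕ × ℕ) (f : ℕ × ℕ × ℕ) : Prop :=
  d = (f.1, f.2.1) ∨ d = (f.2.1, f.2.2) ∨ d = (f.1, f.2.2)

instance (d : ℕ × ℕ) (f : ℕ × ℕ × ℕ) : Decidable (SideOf d f) := by
  unfold SideOf; infer_instance

def Faces (k : ℕ) (T : Finset (ℕ × ℕ)) : Finset (ℕ × ℕ × ℕ) :=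
  (Finset.range k ×ˢ Finset.range k ×ˢ Finset.range k).filter
    (fun f => f.1 < f.2.1 ∧ f.2.1 < f.2.2 ∧
      (f.1, f.2.1) ∈ Efin k T ∧ (f.2.1, f.2.2) ∈ Efin k T ∧ (f.1, f.2.2) ∈ Efin k T)

lemma mem_Faces {k : ℕ} {T : Finset (ℕ × ℕ)} {x y z : ℕ} :
    (x,y,z) ∈ Faces k T ↔ x < y ∧ y < z ∧ z < k ∧
      (x,y) ∈ Efin k T ∧ (y,z) ∈ Efin k T ∧ (x,z) ∈ Efin k T := by
  simp only [Faces, Finset.mem_filter, Finset.mem_product, Finset.mem_range]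
  constructor
  · rintro ⟨⟨r1, r2, r3⟩, h1, h2, h3, h4, h5⟩
    exact ⟨h1, h2, r3, h3, h4, h5⟩
  · rintro ⟨h1, h2, r3, h3, h4, h5⟩
    exact ⟨⟨by omega, by omega, r3⟩, h1, h2, h3, h4, h5⟩

lemma card_faces_diag {k : ℕ} {T : Finset (ℕ × ℕ)} (hT : IsTriangulation k T) (hk : 4 < k)
    {a b : ℕ} (hd : (a,b) ∈ T) :
    ((Faces k T).filter (fun f => SideOf (a,b) f)).card = 2 := by
  have hdg := hT.2.1 _ hd
  unfold IsDiag at hdg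
  simp only [ne_eq] at hdg
  have hE : (a,b) ∈ Efin k T := mem_Efin.2 (Or.inl hd)
  obtain ⟨ci, hci1, hci2, hci3, hci4⟩ := exists_in_apex hT hk hE (by omega)
  obtain ⟨co, hco⟩ := exists_out_apex hT hk hE (by omega)
  rw [Finset.card_eq_two]
  rcases hco with ⟨h5, h6, h7⟩ | ⟨h5, h6, h7, h8⟩
  · -- co < a : f_out = (co, a, b)
    refine ⟨(a, ci, b), (co, a, b), by simp [Prod.ext_iff]; omega, ?_⟩
    ext ⟨x, y, z⟩
    simp only [Finset.mem_filter, Finset.mem_insert, Finset.mem_singleton]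
    constructor
    · rintro ⟨hf, hside⟩
      rw [mem_Faces] at hf
      obtain ⟨f1, f2, f3, f4, f5, f6⟩ := hf
      rcases hside with h | h | h <;> rw [Prod.ext_iff] at h <;> simp only at h <;>
        obtain ⟨ha, hb⟩ := h <;> subst ha <;> subst hb
      · -- (a,b) = (x,y); apex z is an out-apex on the right
        have := out_apex_unique hT hk (by omega : a < b) (by omega : b < k)
          (Or.inr ⟨by omega, by omega, f6, f5⟩) (Or.inl ⟨h5, h6, h7⟩)
        omega
      · -- (a,b) = (y,z); apex x is out-apex on the left : x = co
        have := out_apex_unique hT hk (by omega : a < b) (by omega : b < k)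
          (Or.inl ⟨by omega, f4, f6⟩) (Or.inl ⟨h5, h6, h7⟩)
        right
        simp [Prod.ext_iff, this]
      · -- (a,b) = (x,z); apex y is in-apex : y = ci
        have := in_apex_unique hT hk (by omega : a < y) (by omega : y < b) hci1 hci2
          f4 f5 hci3 hci4
        left
        simp [Prod.ext_iff, this]
    · rintro (h | h) <;> rw [Prod.ext_iff, Prod.ext_iff] at h <;> simp only at h <;>
        obtain ⟨ha, hb, hc⟩ := h <;> subst ha hb hc
      · exact ⟨mem_Faces.2 ⟨hci1, hci2, by omega, hci3, hci4, hE⟩, Or.inr (Or.inr rfl)⟩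
      · exact ⟨mem_Faces.2 ⟨h5, by omega, by omega, h6, hE, h7⟩, Or.inr (Or.inl rfl)⟩
  · -- b < co : f_out = (a, b, co)
    refine ⟨(a, ci, b), (a, b, co), by simp [Prod.ext_iff]; omega, ?_⟩
    ext ⟨x, y, z⟩
    simp only [Finset.mem_filter, Finset.mem_insert, Finset.mem_singleton]
    constructor
    · rintro ⟨hf, hside⟩
      rw [mem_Faces] at hf
      obtain ⟨f1, f2, f3, f4, f5, f6⟩ := hf
      rcases hside with h | h | h <;> rw [Prod.ext_iff] at h <;> simp only at h <;>
        obtain ⟨ha, hb⟩ := h <;> subst ha <;> subst hb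
      · -- (a,b) = (x,y); apex z out-apex on the right : z = co
        have := out_apex_unique hT hk (by omega : a < b) (by omega : b < k)
          (Or.inr ⟨by omega, by omega, f6, f5⟩) (Or.inr ⟨h5, h6, h7, h8⟩)
        right
        simp [Prod.ext_iff, this]
      · -- (a,b) = (y,z); apex x out-apex left : contradiction with co right
        have := out_apex_unique hT hk (by omega : a < b) (by omega : b < k)
          (Or.inl ⟨by omega, f4, f6⟩) (Or.inr ⟨h5, h6, h7, h8⟩)
        omega
      · have := in_apex_unique hT hk (by omega : a < y) (by omega : y < b) hci1 hci2
          f4 f5 hci3 hci4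
        left
        simp [Prod.ext_iff, this]
    · rintro (h | h) <;> rw [Prod.ext_iff, Prod.ext_iff] at h <;> simp only at h <;>
        obtain ⟨ha, hb, hc⟩ := h <;> subst ha hb hc
      · exact ⟨mem_Faces.2 ⟨hci1, hci2, by omega, hci3, hci4, hE⟩, Or.inr (Or.inr rfl)⟩
      · exact ⟨mem_Faces.2 ⟨by omega, h5, h6, hE, h8, h7⟩, Or.inl rfl⟩

lemma card_faces_edge {k : ℕ} {T : Finset (ℕ × ℕ)} (hT : IsTriangulation k T) (hk : 4 < k)
    {a b : ℕ} (hp : (a,b) ∈ Edges k) :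
    ((Faces k T).filter (fun f => SideOf (a,b) f)).card = 1 := by
  have hE : (a,b) ∈ Efin k T := Finset.mem_union_right _ hp
  rw [mem_Edges] at hp
  simp only at hp
  rw [Finset.card_eq_one]
  rcases hp with ⟨hb1, ha1⟩ | ⟨ha0, hbk1⟩
  · -- b = a + 1
    obtain ⟨co, hco⟩ := exists_out_apex hT hk hE (by omega)
    rcases hco with ⟨h5, h6, h7⟩ | ⟨h5, h6, h7, h8⟩
    · refine ⟨(co, a, b), ?_⟩
      ext ⟨x, y, z⟩
      simp only [Finset.mem_filter, Finset.mem_singleton]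
      constructor
      · rintro ⟨hf, hside⟩
        rw [mem_Faces] at hf
        obtain ⟨f1, f2, f3, f4, f5, f6⟩ := hf
        rcases hside with h | h | h <;> rw [Prod.ext_iff] at h <;> simp only at h <;>
          obtain ⟨ha, hb⟩ := h <;> subst ha <;> subst hb
        · have := out_apex_unique hT hk (by omega : a < b) (by omega : b < k)
            (Or.inr ⟨by omega, by omega, f6, f5⟩) (Or.inl ⟨h5, h6, h7⟩)
          omega
        · have := out_apex_unique hT hk (by omega : a < b) (by omega : b < k)
            (Or.inl ⟨by omega, f4, f6⟩) (Or.inl ⟨h5, h6, h7⟩)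
          simp [Prod.ext_iff, this]
        · omega
      · rintro h
        rw [Prod.ext_iff, Prod.ext_iff] at h
        simp only at h
        obtain ⟨ha, hb, hc⟩ := h
        subst ha hb hc
        exact ⟨mem_Faces.2 ⟨h5, by omega, by omega, h6, hE, h7⟩, Or.inr (Or.inl rfl)⟩
    · refine ⟨(a, b, co), ?_⟩
      ext ⟨x, y, z⟩
      simp only [Finset.mem_filter, Finset.mem_singleton]
      constructor
      · rintro ⟨hf, hside⟩
        rw [mem_Faces] at hf
        obtain ⟨f1, f2, f3, f4, f5, f6⟩ := hf
        rcases hside with h | h | h <;> rw [Prod.ext_iff] at h <;> simp only at h <;>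
          obtain ⟨ha, hb⟩ := h <;> subst ha <;> subst hb
        · have := out_apex_unique hT hk (by omega : a < b) (by omega : b < k)
            (Or.inr ⟨by omega, by omega, f6, f5⟩) (Or.inr ⟨h5, h6, h7, h8⟩)
          simp [Prod.ext_iff, this]
        · have := out_apex_unique hT hk (by omega : a < b) (by omega : b < k)
            (Or.inl ⟨by omega, f4, f6⟩) (Or.inr ⟨h5, h6, h7, h8⟩)
          omega
        · omega
      · rintro h
        rw [Prod.ext_iff, Prod.ext_iff] at h
        simp only at h
        obtain ⟨ha, hb, hc⟩ := h
        subst ha hb hc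
        exact ⟨mem_Faces.2 ⟨by omega, h5, h6, hE, h8, h7⟩, Or.inl rfl⟩
  · -- (a,b) = (0, k-1)
    subst ha0
    subst hbk1
    obtain ⟨ci, hci1, hci2, hci3, hci4⟩ := exists_in_apex hT hk hE (by omega)
    refine ⟨(0, ci, k-1), ?_⟩
    ext ⟨x, y, z⟩
    simp only [Finset.mem_filter, Finset.mem_singleton]
    constructor
    · rintro ⟨hf, hside⟩
      rw [mem_Faces] at hf
      obtain ⟨f1, f2, f3, f4, f5, f6⟩ := hf
      rcases hside with h | h | h <;> rw [Prod.ext_iff] at h <;> simp only at h <;>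
        obtain ⟨ha, hb⟩ := h <;> subst ha <;> subst hb
      · omega
      · omega
      · have := in_apex_unique hT hk (by omega : (0:ℕ) < y) (by omega : y < k-1) hci1 hci2
          f4 f5 hci3 hci4
        simp [Prod.ext_iff, this]
    · rintro h
      rw [Prod.ext_iff, Prod.ext_iff] at h
      simp only at h
      obtain ⟨ha, hb, hc⟩ := h
      subst ha hb hc
      exact ⟨mem_Faces.2 ⟨hci1, by omega, by omega, hci3, hci4, hE⟩, Or.inr (Or.inr rfl)⟩

lemma card_Edges {k : ℕ} (hk : 4 < k) : (Edges k).card = k := by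
  rw [Edges, Finset.card_union_of_disjoint, Finset.card_image_of_injective, Finset.card_range,
    Finset.card_singleton]
  · omega
  · intro i j hij
    simpa using hij
  · rw [Finset.disjoint_singleton_right]
    simp only [Finset.mem_image, Finset.mem_range, Prod.ext_iff]
    rintro ⟨i, hi, h1, h2⟩
    omega

lemma T_disj_Edges {k : ℕ} {T : Finset (ℕ × ℕ)} (hT : IsTriangulation k T) :
    Disjoint T (Edges k) := by
  rw [Finset.disjoint_left]
  intro p hp hpe
  have := hT.2.1 _ hp
  unfold IsDiag at this
  rw [mem_Edges] at hpe
  omega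

lemma delta_plus_eps {k : ℕ} {T : Finset (ℕ × ℕ)} (hT : IsTriangulation k T) (hk : 4 < k)
    {f : ℕ × ℕ × ℕ} (hf : f ∈ Faces k T) :
    (T.filter (fun d => SideOf d f)).card + ((Edges k).filter (fun d => SideOf d f)).card = 3 := by
  obtain ⟨x, y, z⟩ := f
  rw [mem_Faces] at hf
  obtain ⟨h1, h2, h3, h4, h5, h6⟩ := hf
  rw [← Finset.card_union_of_disjoint (Finset.disjoint_filter_filter (T_disj_Edges hT))]
  rw [← Finset.filter_union]
  have : (Efin k T).filter (fun d => SideOf d (x,y,z)) = {(x,y), (y,z), (x,z)} := by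
    ext p
    simp only [Finset.mem_filter, Finset.mem_insert, Finset.mem_singleton]
    constructor
    · rintro ⟨hp, hs | hs | hs⟩ <;> simp_all [SideOf]
    · rintro (h | h | h) <;> subst h <;>
        exact ⟨by assumption, by unfold SideOf; simp⟩
  rw [Efin] at this
  rw [this]
  rw [Finset.card_insert_of_notMem (by simp [Prod.ext_iff]; omega),
    Finset.card_insert_of_notMem (by simp [Prod.ext_iff]; omega), Finset.card_singleton]

lemma delta_cases {k : ℕ} {T : Finset (ℕ × ℕ)} (hT : IsTriangulation k T) (hk : 4 < k)
    {f : ℕ × ℕ × ℕ} (hf : f ∈ Faces k T) :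
    (T.filter (fun d => SideOf d f)).card = 1 ∨ (T.filter (fun d => SideOf d f)).card = 2 ∨
    (T.filter (fun d => SideOf d f)).card = 3 := by
  have h3 := delta_plus_eps hT hk hf
  -- rule out 0 : not all three sides can be polygon edges
  have hne : (T.filter (fun d => SideOf d f)).card ≠ 0 := by
    intro h0
    rw [Finset.card_eq_zero] at h0
    obtain ⟨x, y, z⟩ := f
    rw [mem_Faces] at hf
    obtain ⟨h1, h2, hzk, h4, h5, h6⟩ := hf
    have hmem : ∀ p : ℕ × ℕ, p ∈ Efin k T → SideOf p (x,y,z) →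
        (p.2 = p.1 + 1 ∧ p.1 < k - 1) ∨ (p.1 = 0 ∧ p.2 = k - 1) := by
      intro p hp hs
      rcases mem_Efin.1 hp with h | h | h
      · exact absurd (Finset.mem_filter.2 ⟨h, hs⟩) (by rw [h0]; simp)
      · exact Or.inl h
      · exact Or.inr h
    have e1 := hmem (x,y) h4 (Or.inl rfl)
    have e2 := hmem (y,z) h5 (Or.inr (Or.inl rfl))
    have e3 := hmem (x,z) h6 (Or.inr (Or.inr rfl))
    simp only at e1 e2 e3
    omega
  omega

lemma t1_eq_t3_add_two {k : ℕ} {T : Finset (ℕ × ℕ)} (hT : IsTriangulation k T) (hk : 4 < k) :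
    ((Faces k T).filter (fun f => (T.filter (fun d => SideOf d f)).card = 1)).card =
    ((Faces k T).filter (fun f => (T.filter (fun d => SideOf d f)).card = 3)).card + 2 := by
  classical
  set F := Faces k T with hF
  set δ := fun f => (T.filter (fun d => SideOf d f)).card with hδ
  set ε := fun f => ((Edges k).filter (fun d => SideOf d f)).card with hε
  -- incidence count with diagonals
  have swapT : ∑ f ∈ F, δ f = ∑ d ∈ T, (F.filter (fun f => SideOf d f)).card := by
    simp only [hδ, Finset.card_filter]
    exact Finset.sum_comm
  have hTsum : ∑ f ∈ F, δ f = 2 * (k - 3) := by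
    rw [swapT]
    have : ∀ d ∈ T, (F.filter (fun f => SideOf d f)).card = 2 := by
      intro d hd
      obtain ⟨a, b⟩ := d
      exact card_faces_diag hT hk hd
    rw [Finset.sum_congr rfl this, Finset.sum_const, hT.1, smul_eq_mul]
    omega
  have swapE : ∑ f ∈ F, ε f = ∑ d ∈ Edges k, (F.filter (fun f => SideOf d f)).card := by
    simp only [hε, Finset.card_filter]
    exact Finset.sum_comm
  have hEsum : ∑ f ∈ F, ε f = k := by
    rw [swapE]
    have : ∀ d ∈ Edges k, (F.filter (fun f => SideOf d f)).card = 1 := by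
      intro d hd
      obtain ⟨a, b⟩ := d
      exact card_faces_edge hT hk hd
    rw [Finset.sum_congr rfl this, Finset.sum_const, card_Edges hk, smul_eq_mul]
    omega
  have hFcard : 3 * F.card = ∑ f ∈ F, δ f + ∑ f ∈ F, ε f := by
    rw [← Finset.sum_add_distrib]
    have : ∀ f ∈ F, δ f + ε f = 3 := fun f hf => delta_plus_eps hT hk hf
    rw [Finset.sum_congr rfl this, Finset.sum_const, smul_eq_mul]
    omega
  -- partition by δ
  have hdisj12 : Disjoint (F.filter (fun f => δ f = 1)) (F.filter (fun f => δ f = 2)) := by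
    rw [Finset.disjoint_left]
    intro f h1 h2
    rw [Finset.mem_filter] at h1 h2
    omega
  have hdisj13 : Disjoint (F.filter (fun f => δ f = 1) ∪ F.filter (fun f => δ f = 2))
      (F.filter (fun f => δ f = 3)) := by
    rw [Finset.disjoint_left]
    intro f h1 h2
    rw [Finset.mem_union] at h1
    rw [Finset.mem_filter] at h2
    rcases h1 with h1 | h1 <;> rw [Finset.mem_filter] at h1 <;> omega
  have hunion : F = (F.filter (fun f => δ f = 1) ∪ F.filter (fun f => δ f = 2)) ∪
      F.filter (fun f => δ f = 3) := by
    ext f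
    simp only [Finset.mem_union, Finset.mem_filter]
    constructor
    · intro hf
      rcases delta_cases hT hk hf with h | h | h
      · exact Or.inl (Or.inl ⟨hf, h⟩)
      · exact Or.inl (Or.inr ⟨hf, h⟩)
      · exact Or.inr ⟨hf, h⟩
    · rintro ((⟨h, _⟩ | ⟨h, _⟩) | ⟨h, _⟩) <;> exact h
  have hcardsplit : F.card = (F.filter (fun f => δ f = 1)).card +
      (F.filter (fun f => δ f = 2)).card + (F.filter (fun f => δ f = 3)).card := by
    conv_lhs => rw [hunion]
    rw [Finset.card_union_of_disjoint hdisj13, Finset.card_union_of_disjoint hdisj12]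
  have hsumsplit : ∑ f ∈ F, δ f = (F.filter (fun f => δ f = 1)).card +
      (2 * (F.filter (fun f => δ f = 2)).card + 3 * (F.filter (fun f => δ f = 3)).card) := by
    conv_lhs => rw [hunion]
    rw [Finset.sum_union hdisj13, Finset.sum_union hdisj12]
    have e1 : ∑ f ∈ F.filter (fun f => δ f = 1), δ f = (F.filter (fun f => δ f = 1)).card := by
      rw [Finset.sum_congr rfl (fun f hf => (Finset.mem_filter.1 hf).2), Finset.sum_const,
        smul_eq_mul]
      omega
    have e2 : ∑ f ∈ F.filter (fun f => δ f = 2), δ f = 2 * (F.filter (fun f => δ f = 2)).card := by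
      rw [Finset.sum_congr rfl (fun f hf => (Finset.mem_filter.1 hf).2), Finset.sum_const,
        smul_eq_mul]
      omega
    have e3 : ∑ f ∈ F.filter (fun f => δ f = 3), δ f = 3 * (F.filter (fun f => δ f = 3)).card := by
      rw [Finset.sum_congr rfl (fun f hf => (Finset.mem_filter.1 hf).2), Finset.sum_const,
        smul_eq_mul]
      omega
    omega
  simp only [hδ] at hTsum hEsum hFcard hcardsplit hsumsplit
  omega

lemma tf_iff_t3 {k : ℕ} {T : Finset (ℕ × ℕ)} (hT : IsTriangulation k T) (hk : 4 < k) :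
    TriangleFree T ↔
      ((Faces k T).filter (fun f => (T.filter (fun d => SideOf d f)).card = 3)).card = 0 := by
  rw [Finset.card_eq_zero]
  constructor
  · intro htf
    rw [Finset.eq_empty_iff_forall_notMem]
    rintro ⟨x, y, z⟩ hf
    rw [Finset.mem_filter] at hf
    obtain ⟨hfF, hf3⟩ := hf
    have hmf := mem_Faces.1 hfF
    have hsub : T.filter (fun d => SideOf d (x,y,z)) ⊆ {(x,y), (y,z), (x,z)} := by
      intro p hp
      have := (Finset.mem_filter.1 hp).2
      rcases this with h | h | h <;> simp [h]
    have hcard3 : ({(x,y), (y,z), (x,z)} : Finset (ℕ × ℕ)).card = 3 := by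
      rw [Finset.card_insert_of_notMem (by simp [Prod.ext_iff]; omega),
        Finset.card_insert_of_notMem (by simp [Prod.ext_iff]; omega), Finset.card_singleton]
    have heq := Finset.eq_of_subset_of_card_le hsub (by omega)
    have h1 : (x,y) ∈ T := by
      have : (x,y) ∈ T.filter (fun d => SideOf d (x,y,z)) := by
        rw [heq]; simp
      exact (Finset.mem_filter.1 this).1
    have h2 : (y,z) ∈ T := by
      have : (y,z) ∈ T.filter (fun d => SideOf d (x,y,z)) := by
        rw [heq]; simp
      exact (Finset.mem_filter.1 this).1
    have h3 : (x,z) ∈ T := by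
      have : (x,z) ∈ T.filter (fun d => SideOf d (x,y,z)) := by
        rw [heq]; simp
      exact (Finset.mem_filter.1 this).1
    exact htf ⟨x, y, z, hmf.1, hmf.2.1, h1, h2, h3⟩
  · intro hempty
    rintro ⟨a, b, c, hab, hbc, h1, h2, h3⟩
    have hd3 := hT.2.1 _ h3
    unfold IsDiag at hd3
    simp only at hd3
    have hfF : (a,b,c) ∈ Faces k T := mem_Faces.2 ⟨hab, hbc, by omega,
      mem_Efin.2 (Or.inl h1), mem_Efin.2 (Or.inl h2), mem_Efin.2 (Or.inl h3)⟩
    have hsub : ({(a,b), (b,c), (a,c)} : Finset (ℕ × ℕ)) ⊆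
        T.filter (fun d => SideOf d (a,b,c)) := by
      intro p hp
      simp only [Finset.mem_insert, Finset.mem_singleton] at hp
      rcases hp with h | h | h <;> subst h <;> rw [Finset.mem_filter] <;>
        exact ⟨by assumption, by unfold SideOf; simp⟩
    have hcard3 : ({(a,b), (b,c), (a,c)} : Finset (ℕ × ℕ)).card = 3 := by
      rw [Finset.card_insert_of_notMem (by simp [Prod.ext_iff]; omega),
        Finset.card_insert_of_notMem (by simp [Prod.ext_iff]; omega), Finset.card_singleton]
    have hsub2 : T.filter (fun d => SideOf d (a,b,c)) ⊆ {(a,b), (b,c), (a,c)} := by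
      intro p hp
      have := (Finset.mem_filter.1 hp).2
      rcases this with h | h | h <;> simp [h]
    have hcard : (T.filter (fun d => SideOf d (a,b,c))).card = 3 := by
      have := Finset.Subset.antisymm hsub2 hsub
      rw [this, hcard3]
    have : (a,b,c) ∈ (Faces k T).filter (fun f => (T.filter (fun d => SideOf d f)).card = 3) :=
      Finset.mem_filter.2 ⟨hfF, hcard⟩
    rw [hempty] at this
    exact absurd this (Finset.notMem_empty _)

def gmap (k : ℕ) (d : ℕ × ℕ) : ℕ × ℕ × ℕ :=
  if d.2 = d.1 + 2 then (d.1, d.1 + 1, d.2) else if d.1 = 0 then (0, k-2, k-1) else (0, 1, k-1)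

lemma not_edge_mem {k : ℕ} {T : Finset (ℕ × ℕ)} (hT : IsTriangulation k T) {u v : ℕ}
    (h : v = u + 1 ∨ (u = 0 ∧ v = k - 1)) : (u,v) ∉ T := by
  intro hm
  have := hT.2.1 _ hm
  simp only [IsDiag, ne_eq] at this
  rcases h with h | h <;> omega


lemma short_card {k : ℕ} {T : Finset (ℕ × ℕ)} (hT : IsTriangulation k T) (hk : 4 < k) :
    (T.filter (fun d => IsShort k d)).card =
    ((Faces k T).filter (fun f => (T.filter (fun d => SideOf d f)).card = 1)).card := by
  classical
  have key : ∀ d : ℕ × ℕ, d ∈ T → IsShort k d →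
      gmap k d ∈ Faces k T ∧ T.filter (fun e => SideOf e (gmap k d)) = {d} := by
    rintro ⟨a, b⟩ hdT hshort
    have hdg := hT.2.1 _ hdT
    unfold IsDiag at hdg
    simp only [ne_eq] at hdg
    unfold IsShort at hshort
    simp only at hshort
    have hdE : (a,b) ∈ Efin k T := mem_Efin.2 (Or.inl hdT)
    rcases hshort with h | ⟨h1, h2⟩ | ⟨h1, h2⟩
    · -- b = a + 2
      have hg : gmap k (a,b) = (a, a+1, b) := by
        unfold gmap
        rw [if_pos (by simpa using h)]
      rw [hg]
      constructor
      · refine mem_Faces.2 ⟨by omega, by omega, by omega, ?_, ?_, hdE⟩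
        · exact mem_Efin.2 (Or.inr (Or.inl (by simp; omega)))
        · exact mem_Efin.2 (Or.inr (Or.inl (by simp; omega)))
      · ext ⟨u, v⟩
        simp only [Finset.mem_filter, Finset.mem_singleton]
        constructor
        · rintro ⟨huv, hs | hs | hs⟩ <;> rw [Prod.ext_iff] at hs <;> simp only at hs <;>
            obtain ⟨hu, hv⟩ := hs <;> subst hu <;> subst hv
          · exact absurd huv (not_edge_mem hT (Or.inl rfl))
          · exact absurd huv (not_edge_mem hT (Or.inl (by omega)))
          · rfl
        · rintro h
          rw [Prod.ext_iff] at h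
          simp only at h
          obtain ⟨hu, hv⟩ := h
          subst hu hv
          exact ⟨hdT, Or.inr (Or.inr rfl)⟩
    · -- (a,b) = (0, k-2)
      subst h1
      subst h2
      have hg : gmap k (0, k-2) = (0, k-2, k-1) := by
        unfold gmap
        rw [if_neg (by simp; omega), if_pos rfl]
      rw [hg]
      constructor
      · refine mem_Faces.2 ⟨by omega, by omega, by omega, hdE, ?_, ?_⟩
        · exact mem_Efin.2 (Or.inr (Or.inl (by simp; omega)))
        · exact mem_Efin.2 (Or.inr (Or.inr (by simp)))
      · ext ⟨u, v⟩
        simp only [Finset.mem_filter, Finset.mem_singleton]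
        constructor
        · rintro ⟨huv, hs | hs | hs⟩ <;> rw [Prod.ext_iff] at hs <;> simp only at hs <;>
            obtain ⟨hu, hv⟩ := hs <;> subst hu <;> subst hv
          · rfl
          · exact absurd huv (not_edge_mem hT (Or.inl (by omega)))
          · exact absurd huv (not_edge_mem hT (Or.inr (by omega)))
        · rintro h
          rw [Prod.ext_iff] at h
          simp only at h
          obtain ⟨hu, hv⟩ := h
          subst hu hv
          exact ⟨hdT, Or.inl rfl⟩
    · -- (a,b) = (1, k-1)
      subst h1
      subst h2
      have hg : gmap k (1, k-1) = (0, 1, k-1) := by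
        unfold gmap
        rw [if_neg (by simp; omega), if_neg (by simp)]
      rw [hg]
      constructor
      · refine mem_Faces.2 ⟨by omega, by omega, by omega, ?_, hdE, ?_⟩
        · exact mem_Efin.2 (Or.inr (Or.inl (by simp; omega)))
        · exact mem_Efin.2 (Or.inr (Or.inr (by simp)))
      · ext ⟨u, v⟩
        simp only [Finset.mem_filter, Finset.mem_singleton]
        constructor
        · rintro ⟨huv, hs | hs | hs⟩ <;> rw [Prod.ext_iff] at hs <;> simp only at hs <;>
            obtain ⟨hu, hv⟩ := hs <;> subst hu <;> subst hv
          · exact absurd huv (not_edge_mem hT (Or.inl rfl))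
          · rfl
          · exact absurd huv (not_edge_mem hT (Or.inr (by omega)))
        · rintro h
          rw [Prod.ext_iff] at h
          simp only at h
          obtain ⟨hu, hv⟩ := h
          subst hu hv
          exact ⟨hdT, Or.inr (Or.inl rfl)⟩
  have himg : (T.filter (fun d => IsShort k d)).image (gmap k) =
      (Faces k T).filter (fun f => (T.filter (fun d => SideOf d f)).card = 1) := by
    ext f
    simp only [Finset.mem_image, Finset.mem_filter]
    constructor
    · rintro ⟨d, hd, rfl⟩
      obtain ⟨h1, h2⟩ := key d hd.1 hd.2
      exact ⟨h1, by rw [h2]; simp⟩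
    · rintro ⟨hfF, hf1⟩
      obtain ⟨d, hdeq⟩ := Finset.card_eq_one.1 hf1
      have hdmem : d ∈ T ∧ SideOf d f := by
        have : d ∈ T.filter (fun e => SideOf e f) := by rw [hdeq]; simp
        exact Finset.mem_filter.1 this
      obtain ⟨hdT, hside⟩ := hdmem
      obtain ⟨x, y, z⟩ := f
      have hmf := mem_Faces.1 hfF
      obtain ⟨m1, m2, m3, m4, m5, m6⟩ := hmf
      have notT : ∀ p : ℕ × ℕ, SideOf p (x,y,z) → p ≠ d → p ∉ T := by
        intro p hp hne hpT
        have : p ∈ T.filter (fun e => SideOf e (x,y,z)) := Finset.mem_filter.2 ⟨hpT, hp⟩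
        rw [hdeq] at this
        exact hne (Finset.mem_singleton.1 this)
      unfold SideOf at hside
      simp only at hside
      rcases hside with h | h | h <;> subst h
      · -- d = (x,y) : f = (0, k-2, k-1)
        have hyz : (y,z) ∉ T := notT _ (Or.inr (Or.inl rfl)) (by simp [Prod.ext_iff]; omega)
        have hxz : (x,z) ∉ T := notT _ (Or.inr (Or.inr rfl)) (by simp [Prod.ext_iff]; omega)
        have e5 : z = y + 1 := by
          rcases mem_Efin.1 m5 with h | h | h
          · exact absurd h hyz
          · exact h.1
          · simp only at h; omega
        have e6 : x = 0 ∧ z = k - 1 := by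
          rcases mem_Efin.1 m6 with h | h | h
          · exact absurd h hxz
          · simp only at h; omega
          · exact h
        have hxy : x = 0 ∧ y = k - 2 := by omega
        refine ⟨(x,y), ⟨hdT, ?_⟩, ?_⟩
        · simp only [IsShort]
          omega
        · unfold gmap
          simp only
          rw [if_neg (by omega), if_pos (by omega)]
          simp only [Prod.ext_iff]
          omega
      · -- d = (y,z) : f = (0, 1, k-1)
        have hxy : (x,y) ∉ T := notT _ (Or.inl rfl) (by simp [Prod.ext_iff]; omega)
        have hxz : (x,z) ∉ T := notT _ (Or.inr (Or.inr rfl)) (by simp [Prod.ext_iff]; omega)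
        have e4 : y = x + 1 := by
          rcases mem_Efin.1 m4 with h | h | h
          · exact absurd h hxy
          · exact h.1
          · simp only at h; omega
        have e6 : x = 0 ∧ z = k - 1 := by
          rcases mem_Efin.1 m6 with h | h | h
          · exact absurd h hxz
          · simp only at h; omega
          · exact h
        refine ⟨(y,z), ⟨hdT, ?_⟩, ?_⟩
        · simp only [IsShort]
          omega
        · unfold gmap
          simp only
          rw [if_neg (by omega), if_neg (by omega)]
          simp only [Prod.ext_iff]
          omega
      · -- d = (x,z) : f = (x, x+1, x+2)
        have hxy : (x,y) ∉ T := notT _ (Or.inl rfl) (by simp [Prod.ext_iff]; omega)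
        have hyz : (y,z) ∉ T := notT _ (Or.inr (Or.inl rfl)) (by simp [Prod.ext_iff]; omega)
        have e4 : y = x + 1 := by
          rcases mem_Efin.1 m4 with h | h | h
          · exact absurd h hxy
          · exact h.1
          · simp only at h; omega
        have e5 : z = y + 1 := by
          rcases mem_Efin.1 m5 with h | h | h
          · exact absurd h hyz
          · exact h.1
          · simp only at h; omega
        refine ⟨(x,z), ⟨hdT, ?_⟩, ?_⟩
        · simp only [IsShort]
          omega
        · unfold gmap
          simp only
          rw [if_pos (by omega)]
          exact Prod.ext rfl (Prod.ext e4.symm rfl)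
  have hinj : Set.InjOn (gmap k) (T.filter (fun d => IsShort k d)) := by
    intro d hd e he hge
    rw [Finset.mem_coe, Finset.mem_filter] at hd he
    have h1 := (key d hd.1 hd.2).2
    have h2 := (key e he.1 he.2).2
    rw [hge] at h1
    rw [h1] at h2
    exact Finset.singleton_injective h2
  rw [← himg, Finset.card_image_of_injOn hinj]

theorem stmt10 (k : ℕ) (hk : 4 < k) (T : Finset (ℕ × ℕ)) (hT : IsTriangulation k T) :
    TriangleFree T ↔ (T.filter fun d => IsShort k d).card = 2 := by
  rw [tf_iff_t3 hT hk]
  have h1 := t1_eq_t3_add_two hT hk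
  have h2 := short_card hT hk
  rw [h2, h1]
  omega
end

section
/- Let k ≥ 5 and let T be a triangle-free triangulation of a convex k-gon. Then T admits exactly two proper colorings, i.e., exactly two bijective labelings of its k−3 chords by {0, 1, …, k−4} such that (i) the chord labeled 0 is a short chord, and (ii) whenever two chords lie on a common triangle of T, their labels are consecutive integers. -/
/-- The pair `p` (with `p.1 < p.2`) is a side available to triangles: either a diagonal
of `T` or a boundary edge of the polygon. -/
def SideOk (k : ℕ) (T : Finset (ℕ × ℕ)) (p : ℕ × ℕ) : Prop :=
  p ∈ T ∨ p.2 = p.1 + 1 ∨ (p.1 = 0 ∧ p.2 = k - 1)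

/-- `t = (a, b, c)` with `a < b < c < k` is a triangle of the triangulation `T`. -/
def IsTri (k : ℕ) (T : Finset (ℕ × ℕ)) (t : ℕ × ℕ × ℕ) : Prop :=
  t.1 < t.2.1 ∧ t.2.1 < t.2.2 ∧ t.2.2 < k ∧
    SideOk k T (t.1, t.2.1) ∧ SideOk k T (t.2.1, t.2.2) ∧ SideOk k T (t.1, t.2.2)

/-- `d` is one of the three sides of the triangle `t`. -/
def TriSide (t : ℕ × ℕ × ℕ) (d : ℕ × ℕ) : Prop :=
  d = (t.1, t.2.1) ∨ d = (t.2.1, t.2.2) ∨ d = (t.1, t.2.2)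

/-- A proper coloring of the triangulation `T` of the convex `k`-gon: a bijective
labeling of its `k − 3` chords by `{0, …, k−4}` such that the chord labeled `0` is a
short chord and chords lying on a common triangle get consecutive labels. -/
def ProperColoring (k : ℕ) (T : Finset (ℕ × ℕ)) (f : {d // d ∈ T} ≃ Fin (k - 3)) : Prop :=
  (∀ d : {d // d ∈ T}, (f d : ℕ) = 0 → IsShort k d.1) ∧
  ∀ d e : {d // d ∈ T}, d ≠ e →
    (∃ t : ℕ × ℕ × ℕ, IsTri k T t ∧ TriSide t d.1 ∧ TriSide t e.1) →
    ((f d : ℕ) = (f e : ℕ) + 1 ∨ (f e : ℕ) = (f d : ℕ) + 1)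


namespace TF12


def NC (T : Finset (ℕ × ℕ)) : Prop := ∀ d ∈ T, ∀ e ∈ T, ¬ Cross d e

def DiagV (V : Finset ℕ) (d : ℕ × ℕ) : Prop :=
  d.1 ∈ V ∧ d.2 ∈ V ∧ d.1 < d.2 ∧ (∃ v ∈ V, d.1 < v ∧ v < d.2) ∧ (∃ v ∈ V, v < d.1 ∨ d.2 < v)

def AdjV (V : Finset ℕ) (x y : ℕ) : Prop :=
  x ∈ V ∧ y ∈ V ∧ x < y ∧ ∀ v ∈ V, ¬(x < v ∧ v < y)

def WrapV (V : Finset ℕ) (x y : ℕ) : Prop :=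
  x ∈ V ∧ y ∈ V ∧ x < y ∧ (∀ v ∈ V, ¬ v < x) ∧ (∀ v ∈ V, ¬ y < v)

def SideV (V : Finset ℕ) (T : Finset (ℕ × ℕ)) (p : ℕ × ℕ) : Prop :=
  p ∈ T ∨ AdjV V p.1 p.2 ∨ WrapV V p.1 p.2

def TriV (V : Finset ℕ) (T : Finset (ℕ × ℕ)) (t : ℕ × ℕ × ℕ) : Prop :=
  t.1 < t.2.1 ∧ t.2.1 < t.2.2 ∧
    SideV V T (t.1, t.2.1) ∧ SideV V T (t.2.1, t.2.2) ∧ SideV V T (t.1, t.2.2)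

def ShortV (V : Finset ℕ) (d : ℕ × ℕ) : Prop :=
  (V.filter (fun v => d.1 < v ∧ v < d.2)).card = 1 ∨
  (V.filter (fun v => v < d.1 ∨ d.2 < v)).card = 1

def ShT (V : Finset ℕ) (T : Finset (ℕ × ℕ)) (d e : ℕ × ℕ) : Prop :=
  ∃ t, TriV V T t ∧ TriSide t d ∧ TriSide t e

def InnerP (V : Finset ℕ) (T : Finset (ℕ × ℕ)) (d e : ℕ × ℕ) : Prop :=
  ∃ w, d.1 < w ∧ w < d.2 ∧ w ∈ V ∧ TriV V T (d.1, w, d.2) ∧ (e = (d.1, w) ∨ e = (w, d.2))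

def OuterP (V : Finset ℕ) (T : Finset (ℕ × ℕ)) (d e : ℕ × ℕ) : Prop :=
  (∃ c, d.2 < c ∧ c ∈ V ∧ TriV V T (d.1, d.2, c) ∧ (e = (d.2, c) ∨ e = (d.1, c))) ∨
  (∃ c, c < d.1 ∧ c ∈ V ∧ TriV V T (c, d.1, d.2) ∧ (e = (c, d.1) ∨ e = (c, d.2)))

lemma shT_symm {V T d e} (h : ShT V T d e) : ShT V T e d := by
  obtain ⟨t, h1, h2, h3⟩ := h; exact ⟨t, h1, h3, h2⟩

section Main

variable {V : Finset ℕ} {T : Finset (ℕ × ℕ)}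

lemma tf3 (htf : TriangleFree T) {x y z : ℕ} (h1 : x < y) (h2 : y < z) (ha : (x, y) ∈ T) (hb : (y, z) ∈ T)
    (hc : (x, z) ∈ T) : False := htf ⟨x, y, z, h1, h2, ha, hb, hc⟩

lemma sideV_mem (hdiag : ∀ d ∈ T, DiagV V d) {p : ℕ × ℕ} (h : SideV V T p) : p.1 ∈ V ∧ p.2 ∈ V := by
  rcases h with h | h | h
  · have := hdiag _ h; exact ⟨this.1, this.2.1⟩
  · exact ⟨h.1, h.2.1⟩
  · exact ⟨h.1, h.2.1⟩

lemma triV_mem (hdiag : ∀ d ∈ T, DiagV V d) {t : ℕ × ℕ × ℕ} (h : TriV V T t) : t.1 ∈ V ∧ t.2.1 ∈ V ∧ t.2.2 ∈ V := by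
  obtain ⟨-, -, s1, s2, s3⟩ := h
  exact ⟨(sideV_mem hdiag s1).1, (sideV_mem hdiag s2).1, (sideV_mem hdiag s3).2⟩

lemma classify (hdiag : ∀ d ∈ T, DiagV V d) {d e : ℕ × ℕ} (hdT : d ∈ T) (hne : e ≠ d) (h : ShT V T d e) :
    InnerP V T d e ∨ OuterP V T d e := by
  obtain ⟨⟨t1, t2, t3⟩, ht, hd, he⟩ := h
  have hmem := triV_mem hdiag ht
  simp only [TriSide] at hd he
  obtain ⟨x, y⟩ := d
  rcases hd with hd | hd | hd <;> rw [Prod.ext_iff] at hd <;>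
    obtain ⟨hd1, hd2⟩ := hd <;> simp only at hd1 hd2 <;> subst hd1 <;> subst hd2
  · -- d = (t1, t2), outer type A, c = t3
    right; left
    refine ⟨t3, ht.2.1, hmem.2.2, ht, ?_⟩
    rcases he with he | he | he
    · exact absurd he hne
    · exact Or.inl he
    · exact Or.inr he
  · -- d = (t2, t3), outer type B, c = t1
    right; right
    refine ⟨t1, ht.1, hmem.1, ht, ?_⟩
    rcases he with he | he | he
    · exact Or.inl he
    · exact absurd he hne
    · exact Or.inr he
  · -- d = (t1, t3), inner, w = t2
    left
    refine ⟨t2, ht.1, ht.2.1, hmem.2.1, ht, ?_⟩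
    rcases he with he | he | he
    · exact Or.inl he
    · exact Or.inr he
    · exact absurd he hne

lemma innerU (hdiag : ∀ d ∈ T, DiagV V d) (hnc : NC T) (htf : TriangleFree T) {d e e' : ℕ × ℕ} (hdT : d ∈ T) (heT : e ∈ T) (he'T : e' ∈ T)
    (h : InnerP V T d e) (h' : InnerP V T d e') : e = e' := by
  obtain ⟨hxV, hyV, -, -, -⟩ := hdiag _ hdT
  obtain ⟨w, hw1, hw2, hwV, ht, he⟩ := h
  obtain ⟨w', hw'1, hw'2, hw'V, ht', he'⟩ := h'
  have key : ∀ w1 w2 : ℕ, d.1 < w1 → w1 < d.2 → w2 ∈ V → TriV V T (d.1, w1, d.2) →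
      TriV V T (d.1, w2, d.2) → w1 < w2 → w2 < d.2 → False := by
    intro w1 w2 h1 h2 h3 htA htB hlt hlt2
    obtain ⟨-, -, sA1, sA, -⟩ := htA
    obtain ⟨-, -, sB, -, -⟩ := htB
    -- sA : SideV (w1, d.2), sB : SideV (d.1, w2)
    have hA : (w1, d.2) ∈ T := by
      rcases sA with hs | hs | hs
      · exact hs
      · exact absurd ⟨hlt, hlt2⟩ (hs.2.2.2 w2 h3)
      · exact absurd h1 (hs.2.2.2.1 d.1 hxV)
    have hB : (d.1, w2) ∈ T := by
      rcases sB with hs | hs | hs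
      · exact hs
      · exact absurd ⟨h1, hlt⟩ (hs.2.2.2 w1 (sideV_mem hdiag sA1).2)
      · exact absurd hlt2 (hs.2.2.2.2 d.2 hyV)
    exact hnc _ hA _ hB (Or.inr ⟨h1, hlt, hlt2⟩)
  rcases lt_trichotomy w w' with hlt | rfl | hlt
  · exact absurd (key w w' hw1 hw2 hw'V ht ht' hlt hw'2) not_false
  · rcases he with rfl | rfl <;> rcases he' with rfl | rfl
    · rfl
    · exact absurd (tf3 htf hw1 hw2 heT he'T (by rwa [Prod.mk.eta])) not_false
    · exact absurd (tf3 htf hw1 hw2 he'T heT (by rwa [Prod.mk.eta])) not_false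
    · rfl
  · exact absurd (key w' w hw'1 hw'2 hwV ht' ht hlt hw2) not_false

lemma outerU (hdiag : ∀ d ∈ T, DiagV V d) (hnc : NC T) (htf : TriangleFree T) {d e e' : ℕ × ℕ} (hdT : d ∈ T) (heT : e ∈ T) (he'T : e' ∈ T)
    (h : OuterP V T d e) (h' : OuterP V T d e') : e = e' := by
  obtain ⟨hxV, hyV, hxy, -, -⟩ := hdiag _ hdT
  have keyAA : ∀ c c' : ℕ, d.2 < c → c' ∈ V → TriV V T (d.1, d.2, c) →
      TriV V T (d.1, d.2, c') → c < c' → False := by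
    intro c c' h1 h2 htA htB hlt
    obtain ⟨-, -, -, sA2, sA⟩ := htA
    obtain ⟨-, -, -, sB, -⟩ := htB
    -- sA : SideV (d.1, c), sB : SideV (d.2, c')
    have hA : (d.1, c) ∈ T := by
      rcases sA with hs | hs | hs
      · exact hs
      · exact absurd ⟨hxy, h1⟩ (hs.2.2.2 d.2 hyV)
      · exact absurd hlt (hs.2.2.2.2 c' h2)
    have hB : (d.2, c') ∈ T := by
      rcases sB with hs | hs | hs
      · exact hs
      · exact absurd ⟨h1, hlt⟩ (hs.2.2.2 c (sideV_mem hdiag sA2).2)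
      · exact absurd hxy (hs.2.2.2.1 d.1 hxV)
    exact hnc _ hA _ hB (Or.inl ⟨hxy, h1, hlt⟩)
  have keyBB : ∀ c c' : ℕ, c' < d.1 → c ∈ V → TriV V T (c, d.1, d.2) →
      TriV V T (c', d.1, d.2) → c < c' → False := by
    intro c c' h1 h2 htA htB hlt
    obtain ⟨-, -, sB1, -, sB⟩ := htB
    obtain ⟨-, -, sA, -, -⟩ := htA
    -- sA : SideV (c, d.1), sB1 : SideV (c', d.1)
    have hA : (c, d.1) ∈ T := by
      rcases sA with hs | hs | hs
      · exact hs
      · exact absurd ⟨hlt, h1⟩ (hs.2.2.2 c' (sideV_mem hdiag sB1).1)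
      · exact absurd hxy (hs.2.2.2.2 d.2 hyV)
    have hB : (c', d.2) ∈ T := by
      rcases sB with hs | hs | hs
      · exact hs
      · exact absurd ⟨h1, hxy⟩ (hs.2.2.2 d.1 hxV)
      · exact absurd hlt (hs.2.2.2.1 c h2)
    exact hnc _ hA _ hB (Or.inl ⟨hlt, h1, hxy⟩)
  have keyAB : ∀ c c' : ℕ, d.2 < c → c' < d.1 → TriV V T (d.1, d.2, c) →
      TriV V T (c', d.1, d.2) → False := by
    intro c c' h1 h2 htA htB
    obtain ⟨-, -, -, sA2, sA⟩ := htA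
    obtain ⟨-, -, sB1, -, sB⟩ := htB
    -- sA : SideV (d.1, c), sB : SideV (c', d.2)
    have hc'V : c' ∈ V := (sideV_mem hdiag sB1).1
    have hcV : c ∈ V := (sideV_mem hdiag sA2).2
    have hA : (d.1, c) ∈ T := by
      rcases sA with hs | hs | hs
      · exact hs
      · exact absurd ⟨hxy, h1⟩ (hs.2.2.2 d.2 hyV)
      · exact absurd h2 (hs.2.2.2.1 c' hc'V)
    have hB : (c', d.2) ∈ T := by
      rcases sB with hs | hs | hs
      · exact hs
      · exact absurd ⟨h2, hxy⟩ (hs.2.2.2 d.1 hxV)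
      · exact absurd h1 (hs.2.2.2.2 c hcV)
    exact hnc _ hB _ hA (Or.inl ⟨h2, hxy, h1⟩)
  rcases h with ⟨c, hc1, hc2, ht, he⟩ | ⟨c, hc1, hc2, ht, he⟩ <;>
    rcases h' with ⟨c', hc'1, hc'2, ht', he'⟩ | ⟨c', hc'1, hc'2, ht', he'⟩
  · rcases lt_trichotomy c c' with hlt | rfl | hlt
    · exact absurd (keyAA c c' hc1 hc'2 ht ht' hlt) not_false
    · rcases he with rfl | rfl <;> rcases he' with rfl | rfl
      · rfl
      · exact absurd (tf3 htf hxy hc1 (by rwa [Prod.mk.eta]) heT he'T) not_false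
      · exact absurd (tf3 htf hxy hc1 (by rwa [Prod.mk.eta]) he'T heT) not_false
      · rfl
    · exact absurd (keyAA c' c hc'1 hc2 ht' ht hlt) not_false
  · exact absurd (keyAB c c' hc1 hc'1 ht ht') not_false
  · exact absurd (keyAB c' c hc'1 hc1 ht' ht) not_false
  · rcases lt_trichotomy c c' with hlt | rfl | hlt
    · exact absurd (keyBB c c' hc'1 hc2 ht ht' hlt) not_false
    · rcases he with rfl | rfl <;> rcases he' with rfl | rfl
      · rfl
      · exact absurd (tf3 htf hc1 hxy heT (by rwa [Prod.mk.eta]) he'T) not_false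
      · exact absurd (tf3 htf hc1 hxy he'T (by rwa [Prod.mk.eta]) heT) not_false
      · rfl
    · exact absurd (keyBB c' c hc1 hc'2 ht' ht hlt) not_false

lemma deg2 (hdiag : ∀ d ∈ T, DiagV V d) (hnc : NC T) (htf : TriangleFree T) {d e1 e2 e3 : ℕ × ℕ} (hdT : d ∈ T) (h1T : e1 ∈ T) (h2T : e2 ∈ T) (h3T : e3 ∈ T)
    (h12 : e1 ≠ e2) (h13 : e1 ≠ e3) (h23 : e2 ≠ e3)
    (hn1 : e1 ≠ d) (hn2 : e2 ≠ d) (hn3 : e3 ≠ d)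
    (s1 : ShT V T d e1) (s2 : ShT V T d e2) (s3 : ShT V T d e3) : False := by
  rcases classify hdiag hdT hn1 s1 with c1 | c1 <;>
    rcases classify hdiag hdT hn2 s2 with c2 | c2 <;>
      rcases classify hdiag hdT hn3 s3 with c3 | c3
  · exact h12 (innerU hdiag hnc htf hdT h1T h2T c1 c2)
  · exact h12 (innerU hdiag hnc htf hdT h1T h2T c1 c2)
  · exact h13 (innerU hdiag hnc htf hdT h1T h3T c1 c3)
  · exact h23 (outerU hdiag hnc htf hdT h2T h3T c2 c3)
  · exact h23 (innerU hdiag hnc htf hdT h2T h3T c2 c3)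
  · exact h13 (outerU hdiag hnc htf hdT h1T h3T c1 c3)
  · exact h12 (outerU hdiag hnc htf hdT h1T h2T c1 c2)
  · exact h12 (outerU hdiag hnc htf hdT h1T h2T c1 c2)

end Main

section Ear

variable {V : Finset ℕ} {T : Finset (ℕ × ℕ)} {a b m : ℕ}

lemma ear_mem (hm : V.filter (fun v => a < v ∧ v < b) = {m}) : m ∈ V ∧ a < m ∧ m < b := by
  have h : m ∈ V.filter (fun v => a < v ∧ v < b) := by rw [hm]; exact Finset.mem_singleton_self m
  simpa using Finset.mem_filter.1 h

lemma ear_uniq (hm : V.filter (fun v => a < v ∧ v < b) = {m}) :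
    ∀ v ∈ V, a < v → v < b → v = m := by
  intro v hv h1 h2
  have h : v ∈ V.filter (fun v => a < v ∧ v < b) := Finset.mem_filter.2 ⟨hv, h1, h2⟩
  rw [hm] at h
  exact Finset.mem_singleton.1 h

lemma notouch (hdiag : ∀ d ∈ T, DiagV V d) (hnc : NC T) (hab : (a, b) ∈ T)
    (hm : V.filter (fun v => a < v ∧ v < b) = {m}) : ∀ e ∈ T, e.1 ≠ m ∧ e.2 ≠ m := by
  rintro ⟨x, y⟩ he
  obtain ⟨h1V, h2V, h12, ⟨w, hwV, hw1, hw2⟩, -⟩ := hdiag _ he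
  obtain ⟨hmV, ham, hmb⟩ := ear_mem hm
  simp only at h1V h2V h12 hw1 hw2 ⊢
  constructor
  · rintro rfl
    by_cases hyb : b < y
    · exact hnc _ hab _ he (Or.inl ⟨ham, hmb, hyb⟩)
    · have := ear_uniq hm w hwV (by omega) (by omega)
      omega
  · rintro rfl
    by_cases hxa : x < a
    · exact hnc _ he _ hab (Or.inl ⟨hxa, ham, hmb⟩)
    · have := ear_uniq hm w hwV (by omega) (by omega)
      omega

lemma between' (hdiag : ∀ d ∈ T, DiagV V d) (hnc : NC T) (hab : (a, b) ∈ T)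
    (hm : V.filter (fun v => a < v ∧ v < b) = {m}) :
    ∀ e ∈ T, e ≠ (a, b) → ∃ v ∈ V, v ≠ m ∧ e.1 < v ∧ v < e.2 := by
  rintro ⟨x, y⟩ he hne
  obtain ⟨h1V, h2V, h12, ⟨w, hwV, hw1, hw2⟩, -⟩ := hdiag _ he
  obtain ⟨hmV, ham, hmb⟩ := ear_mem hm
  obtain ⟨haV, hbV, hab', -, -⟩ := hdiag _ hab
  obtain ⟨hnx, hny⟩ := notouch hdiag hnc hab hm _ he
  simp only at h1V h2V h12 hw1 hw2 haV hbV hab' hnx hny ⊢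
  by_cases hwm : w = m
  · subst hwm
    have hx : x ≤ a := by
      by_contra hc
      have := ear_uniq hm x h1V (by omega) (by omega)
      omega
    have hy : b ≤ y := by
      by_contra hc
      have := ear_uniq hm y h2V (by omega) (by omega)
      omega
    have hxy' : x ≠ a ∨ y ≠ b := by
      by_contra hc
      push_neg at hc
      exact hne (Prod.ext hc.1 hc.2)
    rcases hxy' with h | h
    · exact ⟨a, haV, by omega, by omega, by omega⟩
    · exact ⟨b, hbV, by omega, by omega, by omega⟩
  · exact ⟨w, hwV, hwm, hw1, hw2⟩

lemma diagV' (hdiag : ∀ d ∈ T, DiagV V d) (hnc : NC T) (hab : (a, b) ∈ T)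
    (hm : V.filter (fun v => a < v ∧ v < b) = {m}) :
    ∀ e ∈ T.erase (a, b), DiagV (V.erase m) e := by
  intro e he'
  obtain ⟨hne, he⟩ := Finset.mem_erase.1 he'
  obtain ⟨h1V, h2V, h12, -, ⟨u, huV, hu⟩⟩ := hdiag _ he
  obtain ⟨hmV, ham, hmb⟩ := ear_mem hm
  obtain ⟨haV, hbV, hab', -, -⟩ := hdiag _ hab
  simp only at haV hbV hab'
  have hnt := notouch hdiag hnc hab hm _ he
  refine ⟨Finset.mem_erase.2 ⟨hnt.1, h1V⟩, Finset.mem_erase.2 ⟨hnt.2, h2V⟩, h12, ?_, ?_⟩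
  · obtain ⟨v, hvV, hvm, hv1, hv2⟩ := between' hdiag hnc hab hm _ he hne
    exact ⟨v, Finset.mem_erase.2 ⟨hvm, hvV⟩, hv1, hv2⟩
  · by_cases hum : u = m
    · subst hum
      rcases hu with h | h
      · exact ⟨a, Finset.mem_erase.2 ⟨by omega, haV⟩, Or.inl (by omega)⟩
      · exact ⟨b, Finset.mem_erase.2 ⟨by omega, hbV⟩, Or.inr (by omega)⟩
    · exact ⟨u, Finset.mem_erase.2 ⟨hum, huV⟩, hu⟩

lemma adj_am (hdiag : ∀ d ∈ T, DiagV V d) (hab : (a, b) ∈ T)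
    (hm : V.filter (fun v => a < v ∧ v < b) = {m}) : AdjV V a m := by
  obtain ⟨hmV, ham, hmb⟩ := ear_mem hm
  obtain ⟨haV, hbV, hab', -, -⟩ := hdiag _ hab
  refine ⟨haV, hmV, ham, fun v hv h => ?_⟩
  have := ear_uniq hm v hv h.1 (by omega)
  omega

lemma adj_mb (hdiag : ∀ d ∈ T, DiagV V d) (hab : (a, b) ∈ T)
    (hm : V.filter (fun v => a < v ∧ v < b) = {m}) : AdjV V m b := by
  obtain ⟨hmV, ham, hmb⟩ := ear_mem hm
  obtain ⟨haV, hbV, hab', -, -⟩ := hdiag _ hab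
  refine ⟨hmV, hbV, hmb, fun v hv h => ?_⟩
  have := ear_uniq hm v hv (by omega) h.2
  omega

lemma eartri (hdiag : ∀ d ∈ T, DiagV V d) (hab : (a, b) ∈ T)
    (hm : V.filter (fun v => a < v ∧ v < b) = {m}) : TriV V T (a, m, b) := by
  obtain ⟨hmV, ham, hmb⟩ := ear_mem hm
  exact ⟨ham, hmb, Or.inr (Or.inl (adj_am hdiag hab hm)),
    Or.inr (Or.inl (adj_mb hdiag hab hm)), Or.inl hab⟩

lemma side_lift (hdiag : ∀ d ∈ T, DiagV V d) (hab : (a, b) ∈ T)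
    (hm : V.filter (fun v => a < v ∧ v < b) = {m}) :
    ∀ p, SideV (V.erase m) (T.erase (a, b)) p → SideV V T p := by
  obtain ⟨hmV, ham, hmb⟩ := ear_mem hm
  obtain ⟨haV, hbV, hab', -, -⟩ := hdiag _ hab
  simp only at haV hbV hab'
  rintro ⟨x, y⟩ hp
  rcases hp with hp | hp | hp
  · exact Or.inl (Finset.mem_of_mem_erase hp)
  · obtain ⟨hp1, hp2, hp12, hpadj⟩ := hp
    simp only at hp1 hp2 hp12 hpadj ⊢
    have hxm := (Finset.mem_erase.1 hp1).1
    have hym := (Finset.mem_erase.1 hp2).1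
    by_cases h : x = a ∧ y = b
    · exact Or.inl (by rw [h.1, h.2]; exact hab)
    · right; left
      refine ⟨Finset.mem_of_mem_erase hp1, Finset.mem_of_mem_erase hp2, hp12, ?_⟩
      rintro v hv ⟨hv1, hv2⟩
      by_cases hvm : v = m
      · subst hvm
        have hxa : x = a := by
          rcases lt_trichotomy x a with hl | hc | hl
          · exact absurd ⟨hl, by omega⟩ (hpadj a (Finset.mem_erase.2 ⟨by omega, haV⟩))
          · exact hc
          · have := ear_uniq hm x (Finset.mem_of_mem_erase hp1) hl (by omega)
            omega
        have hyb : y = b := by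
          rcases lt_trichotomy y b with hl | hc | hl
          · have := ear_uniq hm y (Finset.mem_of_mem_erase hp2) (by omega) hl
            omega
          · exact hc
          · exact absurd ⟨by omega, hl⟩ (hpadj b (Finset.mem_erase.2 ⟨by omega, hbV⟩))
        exact h ⟨hxa, hyb⟩
      · exact hpadj v (Finset.mem_erase.2 ⟨hvm, hv⟩) ⟨hv1, hv2⟩
  · obtain ⟨hp1, hp2, hp12, hlo, hhi⟩ := hp
    simp only at hp1 hp2 hp12 hlo hhi
    right; right
    refine ⟨Finset.mem_of_mem_erase hp1, Finset.mem_of_mem_erase hp2, hp12, ?_, ?_⟩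
    · intro v hv hlt
      by_cases hvm : v = m
      · subst hvm
        exact hlo a (Finset.mem_erase.2 ⟨by omega, haV⟩) (by omega)
      · exact hlo v (Finset.mem_erase.2 ⟨hvm, hv⟩) hlt
    · intro v hv hlt
      by_cases hvm : v = m
      · subst hvm
        exact hhi b (Finset.mem_erase.2 ⟨by omega, hbV⟩) (by omega)
      · exact hhi v (Finset.mem_erase.2 ⟨hvm, hv⟩) hlt

lemma tri_lift (hdiag : ∀ d ∈ T, DiagV V d) (hab : (a, b) ∈ T)
    (hm : V.filter (fun v => a < v ∧ v < b) = {m}) :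
    ∀ t, TriV (V.erase m) (T.erase (a, b)) t → TriV V T t := by
  rintro ⟨t1, t2, t3⟩ ⟨h1, h2, s1, s2, s3⟩
  exact ⟨h1, h2, side_lift hdiag hab hm _ s1, side_lift hdiag hab hm _ s2,
    side_lift hdiag hab hm _ s3⟩

lemma tri_drop (hdiag : ∀ d ∈ T, DiagV V d) (hnc : NC T) (hab : (a, b) ∈ T)
    (hm : V.filter (fun v => a < v ∧ v < b) = {m}) {d e : ℕ × ℕ}
    (hd : d ∈ T.erase (a, b)) (he : e ∈ T.erase (a, b)) (h : ShT V T d e) :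
    ShT (V.erase m) (T.erase (a, b)) d e := by
  obtain ⟨hmV, ham, hmb⟩ := ear_mem hm
  obtain ⟨haV, hbV, hab', -, -⟩ := hdiag _ hab
  simp only at haV hbV hab'
  obtain ⟨⟨t1, t2, t3⟩, ht, hsd, hse⟩ := h
  obtain ⟨h12, h23, s1, s2, s3⟩ := ht
  have hsm1 : ∀ x y : ℕ, SideV V T (x, y) → y = m → x = a := by
    rintro x y hs rfl
    rcases hs with hs | hs | hs
    · exact absurd rfl (notouch hdiag hnc hab hm _ hs).2
    · obtain ⟨hxV, -, hxm, hadj⟩ := hs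
      simp only at hxV hxm hadj
      rcases lt_trichotomy x a with hl | hc | hl
      · exact absurd ⟨hl, ham⟩ (hadj a haV)
      · exact hc
      · have := ear_uniq hm x hxV hl (by omega)
        omega
    · obtain ⟨-, -, -, -, hhi⟩ := hs
      exact absurd hmb (hhi b hbV)
  have hsm2 : ∀ x y : ℕ, SideV V T (x, y) → x = m → y = b := by
    rintro x y hs rfl
    rcases hs with hs | hs | hs
    · exact absurd rfl (notouch hdiag hnc hab hm _ hs).1
    · obtain ⟨-, hyV, hmy, hadj⟩ := hs
      simp only at hyV hmy hadj
      rcases lt_trichotomy y b with hl | hc | hl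
      · have := ear_uniq hm y hyV (by omega) hl
        omega
      · exact hc
      · exact absurd ⟨hmb, hl⟩ (hadj b hbV)
    · obtain ⟨-, -, -, hlo, -⟩ := hs
      exact absurd ham (hlo a haV)
  have hnm : t1 ≠ m ∧ t2 ≠ m ∧ t3 ≠ m := by
    refine ⟨?_, ?_, ?_⟩
    · rintro rfl
      have e2 := hsm2 _ _ s1 rfl
      have e3 := hsm2 _ _ s3 rfl
      omega
    · rintro rfl
      have e1 := hsm1 _ _ s1 rfl
      have e3 := hsm2 _ _ s2 rfl
      subst e1; subst e3
      have hdmem := Finset.mem_erase.1 hd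
      rcases hsd with h | h | h
      · rw [h] at hdmem
        exact absurd rfl (notouch hdiag hnc hab hm _ hdmem.2).2
      · rw [h] at hdmem
        exact absurd rfl (notouch hdiag hnc hab hm _ hdmem.2).1
      · exact hdmem.1 h
    · rintro rfl
      have e1 := hsm1 _ _ s2 rfl
      have e2 := hsm1 _ _ s3 rfl
      omega
  have key : ∀ x y : ℕ, SideV V T (x, y) → x ≠ m → y ≠ m →
      SideV (V.erase m) (T.erase (a, b)) (x, y) := by
    intro x y hs hxm hym
    rcases hs with hs | hs | hs
    · by_cases hab2 : (x, y) = (a, b)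
      · right; left
        rw [Prod.ext_iff] at hab2
        simp only at hab2
        refine ⟨?_, ?_, ?_, ?_⟩
        · exact Finset.mem_erase.2 (by rw [hab2.1]; exact ⟨by omega, haV⟩)
        · exact Finset.mem_erase.2 (by rw [hab2.2]; exact ⟨by omega, hbV⟩)
        · simp only; omega
        · rintro v hv ⟨hv1, hv2⟩
          obtain ⟨hvm, hvV⟩ := Finset.mem_erase.1 hv
          simp only at hv1 hv2
          exact hvm (ear_uniq hm v hvV (by omega) (by omega))
      · exact Or.inl (Finset.mem_erase.2 ⟨hab2, hs⟩)
    · obtain ⟨h1, h2, h3, h4⟩ := hs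
      exact Or.inr (Or.inl ⟨Finset.mem_erase.2 ⟨hxm, h1⟩, Finset.mem_erase.2 ⟨hym, h2⟩, h3,
        fun v hv => h4 v (Finset.mem_of_mem_erase hv)⟩)
    · obtain ⟨h1, h2, h3, h4, h5⟩ := hs
      exact Or.inr (Or.inr ⟨Finset.mem_erase.2 ⟨hxm, h1⟩, Finset.mem_erase.2 ⟨hym, h2⟩, h3,
        fun v hv => h4 v (Finset.mem_of_mem_erase hv),
        fun v hv => h5 v (Finset.mem_of_mem_erase hv)⟩)
  exact ⟨(t1, t2, t3), ⟨h12, h23, key _ _ s1 hnm.1 hnm.2.1, key _ _ s2 hnm.2.1 hnm.2.2,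
    key _ _ s3 hnm.1 hnm.2.2⟩, hsd, hse⟩

lemma earU (hdiag : ∀ d ∈ T, DiagV V d) (hnc : NC T) (htf : TriangleFree T)
    (hab : (a, b) ∈ T) (hm : V.filter (fun v => a < v ∧ v < b) = {m}) {e e' : ℕ × ℕ}
    (heT : e ∈ T) (he'T : e' ∈ T) (hne : e ≠ (a, b)) (hne' : e' ≠ (a, b))
    (s : ShT V T (a, b) e) (s' : ShT V T (a, b) e') : e = e' := by
  obtain ⟨hmV, ham, hmb⟩ := ear_mem hm
  have hnoinner : ∀ f, f ∈ T → InnerP V T (a, b) f → False := by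
    rintro f hf ⟨w, hw1, hw2, hwV, ht, hef⟩
    simp only at hw1 hw2
    have hwm := ear_uniq hm w hwV hw1 hw2
    subst hwm
    rcases hef with rfl | rfl
    · exact (notouch hdiag hnc hab hm _ hf).2 rfl
    · exact (notouch hdiag hnc hab hm _ hf).1 rfl
  rcases classify hdiag hab hne s with c | c
  · exact absurd (hnoinner _ heT c) not_false
  rcases classify hdiag hab hne' s' with c' | c'
  · exact absurd (hnoinner _ he'T c') not_false
  exact outerU hdiag hnc htf hab heT he'T c c'


lemma badshort (hdiag : ∀ d ∈ T, DiagV V d) (hnc : NC T) (hab : (a, b) ∈ T)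
    (hm : V.filter (fun v => a < v ∧ v < b) = {m}) {e : ℕ × ℕ}
    (he' : e ∈ T.erase (a, b)) (hS' : ShortV (V.erase m) e) (hS : ¬ ShortV V e) :
    ShT V T (a, b) e := by
  obtain ⟨hne, he⟩ := Finset.mem_erase.1 he'
  obtain ⟨hxV, hyV, hxy, -, -⟩ := hdiag _ he
  obtain ⟨hmV, ham, hmb⟩ := ear_mem hm
  obtain ⟨haV, hbV, hab', -, -⟩ := hdiag _ hab
  simp only at haV hbV hab'
  obtain ⟨hnx, hny⟩ := notouch hdiag hnc hab hm _ he
  have hnexy : e.1 ≠ a ∨ e.2 ≠ b := by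
    by_contra hc
    push_neg at hc
    exact hne (Prod.ext hc.1 hc.2)
  unfold ShortV at hS hS'
  rw [Finset.filter_erase, Finset.filter_erase] at hS'
  push_neg at hS
  set A := V.filter (fun v => e.1 < v ∧ v < e.2) with hA
  set B := V.filter (fun v => v < e.1 ∨ e.2 < v) with hB
  have hmemA : ∀ v, v ∈ A ↔ v ∈ V ∧ e.1 < v ∧ v < e.2 := by
    intro v; rw [hA, Finset.mem_filter]
  have hmemB : ∀ v, v ∈ B ↔ v ∈ V ∧ (v < e.1 ∨ e.2 < v) := by
    intro v; rw [hB, Finset.mem_filter]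
  have hm_pos : (e.1 < m ∧ m < e.2) ∨ m < e.1 ∨ e.2 < m := by omega
  rcases hm_pos with hin | hout
  · -- m strictly inside e
    have hmA : m ∈ A := (hmemA m).2 ⟨hmV, hin⟩
    have hmB : m ∉ B := fun h => by have := (hmemB m).1 h; omega
    rw [Finset.erase_eq_of_notMem hmB] at hS'
    have hApos : 0 < A.card := Finset.card_pos.2 ⟨m, hmA⟩
    have hAe : (A.erase m).card = A.card - 1 := Finset.card_erase_of_mem hmA
    rcases hS' with h1 | h1
    swap
    · exact absurd h1 hS.2
    have hA2 : A.card = 2 := by omega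
    have hxa : e.1 ≤ a := by
      by_contra hc
      have := ear_uniq hm e.1 hxV (by omega) (by omega)
      omega
    have hyb : b ≤ e.2 := by
      by_contra hc
      have := ear_uniq hm e.2 hyV (by omega) (by omega)
      omega
    by_cases hxa' : e.1 = a
    · have hyb' : b < e.2 := by omega
      have hbA : b ∈ A := (hmemA b).2 ⟨hbV, by omega⟩
      have hsub : ({m, b} : Finset ℕ) ⊆ A := by
        intro v hv
        simp only [Finset.mem_insert, Finset.mem_singleton] at hv
        rcases hv with rfl | rfl
        exacts [hmA, hbA]
      have hAeq : ({m, b} : Finset ℕ) = A := by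
        apply Finset.eq_of_subset_of_card_le hsub
        rw [Finset.card_insert_of_notMem (by simp; omega), Finset.card_singleton]
        omega
      have hadj : AdjV V b e.2 := by
        refine ⟨hbV, hyV, hyb', fun v hv hh => ?_⟩
        have : v ∈ A := (hmemA v).2 ⟨hv, by omega⟩
        rw [← hAeq] at this
        simp only [Finset.mem_insert, Finset.mem_singleton] at this
        omega
      refine ⟨(a, b, e.2), ⟨hab', hyb', Or.inl hab, Or.inr (Or.inl hadj), Or.inl ?_⟩, ?_, ?_⟩
      · have : (a, e.2) = e := by rw [← hxa']
        rw [this]; exact he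
      · exact Or.inl rfl
      · right; right
        rw [← hxa']
    · have hxa'' : e.1 < a := by omega
      have haA : a ∈ A := (hmemA a).2 ⟨haV, by omega⟩
      have hyb' : e.2 = b := by
        by_contra hc
        have hbA : b ∈ A := (hmemA b).2 ⟨hbV, by omega⟩
        have hsub : ({m, a, b} : Finset ℕ) ⊆ A := by
          intro v hv
          simp only [Finset.mem_insert, Finset.mem_singleton] at hv
          rcases hv with rfl | rfl | rfl
          exacts [hmA, haA, hbA]
        have h3 : ({m, a, b} : Finset ℕ).card = 3 := by
          rw [Finset.card_eq_three]
          exact ⟨m, a, b, by omega, by omega, by omega, rfl⟩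
        have := Finset.card_le_card hsub
        omega
      have hsub : ({m, a} : Finset ℕ) ⊆ A := by
        intro v hv
        simp only [Finset.mem_insert, Finset.mem_singleton] at hv
        rcases hv with rfl | rfl
        exacts [hmA, haA]
      have hAeq : ({m, a} : Finset ℕ) = A := by
        apply Finset.eq_of_subset_of_card_le hsub
        rw [Finset.card_insert_of_notMem (by simp; omega), Finset.card_singleton]
        omega
      have hadj : AdjV V e.1 a := by
        refine ⟨hxV, haV, hxa'', fun v hv hh => ?_⟩
        have : v ∈ A := (hmemA v).2 ⟨hv, by omega⟩
        rw [← hAeq] at this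
        simp only [Finset.mem_insert, Finset.mem_singleton] at this
        omega
      refine ⟨(e.1, a, b), ⟨hxa'', hab', Or.inr (Or.inl hadj), Or.inl hab, Or.inl ?_⟩, ?_, ?_⟩
      · have : (e.1, b) = e := by rw [← hyb']
        rw [this]; exact he
      · exact Or.inr (Or.inl rfl)
      · right; right
        rw [← hyb']
  · -- m strictly outside e
    have hmB : m ∈ B := (hmemB m).2 ⟨hmV, hout⟩
    have hmA : m ∉ A := fun h => by have := (hmemA m).1 h; omega
    rw [Finset.erase_eq_of_notMem hmA] at hS'
    rcases hS' with h1 | h1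
    · exact absurd h1 hS.1
    have hBpos : 0 < B.card := Finset.card_pos.2 ⟨m, hmB⟩
    have hBe : (B.erase m).card = B.card - 1 := Finset.card_erase_of_mem hmB
    have hB2 : B.card = 2 := by omega
    rcases hout with hlt | hgt
    · -- m < e.1
      have haB : a ∈ B := (hmemB a).2 ⟨haV, Or.inl (by omega)⟩
      have hsub : ({a, m} : Finset ℕ) ⊆ B := by
        intro v hv
        simp only [Finset.mem_insert, Finset.mem_singleton] at hv
        rcases hv with rfl | rfl
        exacts [haB, hmB]
      have hBeq : ({a, m} : Finset ℕ) = B := by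
        apply Finset.eq_of_subset_of_card_le hsub
        rw [Finset.card_insert_of_notMem (by simp; omega), Finset.card_singleton]
        omega
      have hbmem : ∀ v, v ∈ B → v = a ∨ v = m := by
        intro v hv
        rw [← hBeq] at hv
        simp only [Finset.mem_insert, Finset.mem_singleton] at hv
        exact hv
      have hbe : b = e.1 := by
        have hb1 : ¬ b < e.1 := by
          intro h
          have := hbmem b ((hmemB b).2 ⟨hbV, Or.inl h⟩)
          omega
        have hb2 : ¬ e.2 < b := by
          intro h
          have := hbmem b ((hmemB b).2 ⟨hbV, Or.inr h⟩)
          omega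
        by_contra hc
        have := ear_uniq hm e.1 hxV (by omega) (by omega)
        omega
      have hwrap : WrapV V a e.2 := by
        refine ⟨haV, hyV, by omega, ?_, ?_⟩
        · intro v hv hvlt
          have := hbmem v ((hmemB v).2 ⟨hv, Or.inl (by omega)⟩)
          omega
        · intro v hv hvlt
          have := hbmem v ((hmemB v).2 ⟨hv, Or.inr hvlt⟩)
          omega
      refine ⟨(a, e.1, e.2), ⟨(show a < e.1 by omega), hxy, Or.inl ?_, Or.inl ?_, Or.inr (Or.inr hwrap)⟩,
        ?_, ?_⟩
      · rw [← hbe]; exact hab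
      · exact he
      · left
        rw [← hbe]
      · exact Or.inr (Or.inl rfl)
    · -- e.2 < m
      have hbB : b ∈ B := (hmemB b).2 ⟨hbV, Or.inr (by omega)⟩
      have hsub : ({m, b} : Finset ℕ) ⊆ B := by
        intro v hv
        simp only [Finset.mem_insert, Finset.mem_singleton] at hv
        rcases hv with rfl | rfl
        exacts [hmB, hbB]
      have hBeq : ({m, b} : Finset ℕ) = B := by
        apply Finset.eq_of_subset_of_card_le hsub
        rw [Finset.card_insert_of_notMem (by simp; omega), Finset.card_singleton]
        omega
      have hbmem : ∀ v, v ∈ B → v = m ∨ v = b := by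
        intro v hv
        rw [← hBeq] at hv
        simp only [Finset.mem_insert, Finset.mem_singleton] at hv
        exact hv
      have hae : a = e.2 := by
        have ha1 : ¬ a < e.1 := by
          intro h
          have := hbmem a ((hmemB a).2 ⟨haV, Or.inl h⟩)
          omega
        have ha2 : ¬ e.2 < a := by
          intro h
          have := hbmem a ((hmemB a).2 ⟨haV, Or.inr h⟩)
          omega
        by_contra hc
        have := ear_uniq hm e.2 hyV (by omega) (by omega)
        omega
      have hwrap : WrapV V e.1 b := by
        refine ⟨hxV, hbV, by omega, ?_, ?_⟩
        · intro v hv hvlt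
          have := hbmem v ((hmemB v).2 ⟨hv, Or.inl hvlt⟩)
          omega
        · intro v hv hvlt
          have := hbmem v ((hmemB v).2 ⟨hv, Or.inr (by omega)⟩)
          omega
      refine ⟨(e.1, e.2, b), ⟨hxy, (show e.2 < b by omega), Or.inl ?_, Or.inl ?_, Or.inr (Or.inr hwrap)⟩,
        ?_, ?_⟩
      · exact he
      · rw [← hae]; exact hab
      · right; left
        rw [← hae]
      · exact Or.inl rfl


end Ear


lemma nc_subset {S S' : Finset (ℕ × ℕ)} (h : S' ⊆ S) (hnc : NC S) : NC S' :=
  fun d hd e he => hnc d (h hd) e (h he)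

lemma maxcard : ∀ (S : Finset (ℕ × ℕ)) (V : Finset ℕ),
    (∀ d ∈ S, DiagV V d) → NC S → S.card ≤ V.card - 3 := by
  intro S
  induction S using Finset.strongInduction with
  | _ S ih =>
  intro V hd hnc
  rcases S.eq_empty_or_nonempty with rfl | ⟨⟨a, b⟩, hab⟩
  · simp
  obtain ⟨haV, hbV, hab', ⟨w, hwV, hw1, hw2⟩, ⟨u, huV, hu⟩⟩ := hd _ hab
  set S1 := S.filter (fun e => a ≤ e.1 ∧ e.2 ≤ b ∧ e ≠ (a, b)) with hS1
  set S2 := S.filter (fun e => e ≠ (a, b) ∧ ¬(a ≤ e.1 ∧ e.2 ≤ b)) with hS2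
  set V1 := V.filter (fun v => a ≤ v ∧ v ≤ b) with hV1
  set V2 := V.filter (fun v => v ≤ a ∨ b ≤ v) with hV2
  have hne' : ∀ e : ℕ × ℕ, e ≠ (a, b) → e.1 ≠ a ∨ e.2 ≠ b := by
    intro e h
    rw [Ne, Prod.ext_iff, not_and_or] at h
    exact h
  have hcase : ∀ e ∈ S, e ≠ (a, b) → ¬(a ≤ e.1 ∧ e.2 ≤ b) →
      (e.2 ≤ a ∨ b ≤ e.1 ∨ (e.1 ≤ a ∧ b ≤ e.2)) := by
    intro e he hne hni
    have h1 := hnc _ hab _ he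
    have h2 := hnc _ he _ hab
    have h3 := (hd _ he).2.2.1
    have h4 := hne' e hne
    unfold Cross at h1 h2
    omega
  have ss1 : S1 ⊂ S := by
    refine ⟨Finset.filter_subset _ _, fun hsup => ?_⟩
    have := Finset.mem_filter.1 (hsup hab)
    simp at this
  have ss2 : S2 ⊂ S := by
    refine ⟨Finset.filter_subset _ _, fun hsup => ?_⟩
    have := Finset.mem_filter.1 (hsup hab)
    simp at this
  have hd1 : ∀ e ∈ S1, DiagV V1 e := by
    intro e he
    obtain ⟨he, hea, heb, hne⟩ := Finset.mem_filter.1 he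
    obtain ⟨h1, h2, h3, ⟨w', hw'V, hw'⟩, -⟩ := hd _ he
    have h4 := hne' e hne
    refine ⟨Finset.mem_filter.2 ⟨h1, by omega⟩, Finset.mem_filter.2 ⟨h2, by omega⟩, h3,
      ⟨w', Finset.mem_filter.2 ⟨hw'V, by omega⟩, hw'⟩, ?_⟩
    rcases h4 with h4 | h4
    · exact ⟨a, Finset.mem_filter.2 ⟨haV, by omega⟩, by omega⟩
    · exact ⟨b, Finset.mem_filter.2 ⟨hbV, by omega⟩, by omega⟩
  have hd2 : ∀ e ∈ S2, DiagV V2 e := by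
    intro e he
    obtain ⟨he, hne, hni⟩ := Finset.mem_filter.1 he
    obtain ⟨h1, h2, h3, ⟨w', hw'V, hw'⟩, ⟨u', hu'V, hu'⟩⟩ := hd _ he
    have h4 := hne' e hne
    have hc := hcase e he hne hni
    refine ⟨Finset.mem_filter.2 ⟨h1, by omega⟩, Finset.mem_filter.2 ⟨h2, by omega⟩, h3, ?_, ?_⟩
    · rcases hc with hc | hc | hc
      · exact ⟨w', Finset.mem_filter.2 ⟨hw'V, by omega⟩, hw'⟩
      · exact ⟨w', Finset.mem_filter.2 ⟨hw'V, by omega⟩, hw'⟩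
      · by_cases hw2 : w' ≤ a ∨ b ≤ w'
        · exact ⟨w', Finset.mem_filter.2 ⟨hw'V, hw2⟩, hw'⟩
        · by_cases hea : e.1 < a
          · exact ⟨a, Finset.mem_filter.2 ⟨haV, by omega⟩, by omega⟩
          · exact ⟨b, Finset.mem_filter.2 ⟨hbV, by omega⟩, by omega⟩
    · rcases hc with hc | hc | hc
      · exact ⟨b, Finset.mem_filter.2 ⟨hbV, by omega⟩, by omega⟩
      · exact ⟨a, Finset.mem_filter.2 ⟨haV, by omega⟩, by omega⟩
      · exact ⟨u', Finset.mem_filter.2 ⟨hu'V, by omega⟩, by omega⟩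
  have huni : S1 ∪ S2 = S.erase (a, b) := by
    ext e
    simp only [hS1, hS2, Finset.mem_union, Finset.mem_filter, Finset.mem_erase]
    tauto
  have hdisj : Disjoint S1 S2 := by
    rw [Finset.disjoint_left]
    intro e h1 h2
    have := (Finset.mem_filter.1 h1).2
    have := (Finset.mem_filter.1 h2).2
    tauto
  have hcard12 : S1.card + S2.card = S.card - 1 := by
    rw [← Finset.card_union_of_disjoint hdisj, huni, Finset.card_erase_of_mem hab]
  have hSpos : 0 < S.card := Finset.card_pos.2 ⟨_, hab⟩
  have hVuni : V1 ∪ V2 = V := by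
    ext v
    simp only [hV1, hV2, Finset.mem_union, Finset.mem_filter]
    constructor
    · tauto
    · intro hv; by_cases h : a ≤ v ∧ v ≤ b
      · exact Or.inl ⟨hv, h⟩
      · exact Or.inr ⟨hv, by omega⟩
  have hVint : V1 ∩ V2 = {a, b} := by
    ext v
    simp only [hV1, hV2, Finset.mem_inter, Finset.mem_filter, Finset.mem_insert,
      Finset.mem_singleton]
    constructor
    · rintro ⟨⟨-, h1⟩, -, h2⟩; omega
    · rintro (rfl | rfl)
      · exact ⟨⟨haV, by omega⟩, haV, by omega⟩
      · exact ⟨⟨hbV, by omega⟩, hbV, by omega⟩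
  have hVcard : V1.card + V2.card = V.card + 2 := by
    have := Finset.card_union_add_card_inter V1 V2
    rw [hVuni, hVint] at this
    have h2 : ({a, b} : Finset ℕ).card = 2 := by
      rw [Finset.card_insert_of_notMem (by simp; omega), Finset.card_singleton]
    omega
  have hV1c : 3 ≤ V1.card := by
    have hsub : ({a, w, b} : Finset ℕ) ⊆ V1 := by
      intro v hv
      simp only [Finset.mem_insert, Finset.mem_singleton] at hv
      rcases hv with rfl | rfl | rfl
      · exact Finset.mem_filter.2 ⟨haV, by omega⟩
      · exact Finset.mem_filter.2 ⟨hwV, by omega⟩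
      · exact Finset.mem_filter.2 ⟨hbV, by omega⟩
    have h3 : ({a, w, b} : Finset ℕ).card = 3 := by
      rw [Finset.card_eq_three]; exact ⟨a, w, b, by omega, by omega, by omega, rfl⟩
    calc 3 = ({a, w, b} : Finset ℕ).card := h3.symm
    _ ≤ V1.card := Finset.card_le_card hsub
  have hV2c : 3 ≤ V2.card := by
    have hsub : ({a, b, u} : Finset ℕ) ⊆ V2 := by
      intro v hv
      simp only [Finset.mem_insert, Finset.mem_singleton] at hv
      rcases hv with rfl | rfl | rfl
      · exact Finset.mem_filter.2 ⟨haV, by omega⟩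
      · exact Finset.mem_filter.2 ⟨hbV, by omega⟩
      · exact Finset.mem_filter.2 ⟨huV, by omega⟩
    have h3 : ({a, b, u} : Finset ℕ).card = 3 := by
      rw [Finset.card_eq_three]; exact ⟨a, b, u, by omega, by omega, by omega, rfl⟩
    calc 3 = ({a, b, u} : Finset ℕ).card := h3.symm
    _ ≤ V2.card := Finset.card_le_card hsub
  have i1 := ih S1 ss1 V1 hd1 (nc_subset (Finset.filter_subset _ _) hnc)
  have i2 := ih S2 ss2 V2 hd2 (nc_subset (Finset.filter_subset _ _) hnc)
  omega


lemma ear_exists (V : Finset ℕ) (T : Finset (ℕ × ℕ)) (hV : 4 ≤ V.card)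
    (hcard : T.card = V.card - 3) (hdiag : ∀ d ∈ T, DiagV V d) (hnc : NC T) :
    ∃ a b m, (a, b) ∈ T ∧ V.filter (fun v => a < v ∧ v < b) = {m} := by
  have hTne : T.Nonempty := by rw [← Finset.card_pos]; omega
  obtain ⟨d, hd, hmin⟩ :=
    T.exists_min_image (fun d => (V.filter (fun v => d.1 < v ∧ v < d.2)).card) hTne
  obtain ⟨a, b⟩ := d
  set W := V.filter (fun v => a < v ∧ v < b) with hW
  obtain ⟨haV, hbV, hab, ⟨w0, hw0V, hw01, hw02⟩, -⟩ := hdiag _ hd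
  simp only at haV hbV hab hw01 hw02
  have hWpos : 0 < W.card :=
    Finset.card_pos.2 ⟨w0, Finset.mem_filter.2 ⟨hw0V, hw01, hw02⟩⟩
  by_cases h1 : W.card = 1
  · obtain ⟨m, hm⟩ := Finset.card_eq_one.1 h1
    exact ⟨a, b, m, hd, hm⟩
  exfalso
  obtain ⟨v1, hv1, v2, hv2, hvne⟩ := Finset.one_lt_card.1 (by omega : 1 < W.card)
  have hpq : ∃ p q, p ∈ W ∧ q ∈ W ∧ p < q := by
    rcases lt_or_gt_of_ne hvne with h | h
    exacts [⟨v1, v2, hv1, hv2, h⟩, ⟨v2, v1, hv2, hv1, h⟩]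
  obtain ⟨p, q, hp, hq, hpq⟩ := hpq
  obtain ⟨hpV, hp1, hp2⟩ := Finset.mem_filter.1 hp
  obtain ⟨hqV, hq1, hq2⟩ := Finset.mem_filter.1 hq
  have noinside : ∀ e ∈ T, a ≤ e.1 → e.2 ≤ b → e = (a, b) := by
    intro e he h1 h2
    by_contra hne2
    have hss : V.filter (fun v => e.1 < v ∧ v < e.2) ⊂ W := by
      constructor
      · intro v hv
        obtain ⟨hvV, hv1, hv2⟩ := Finset.mem_filter.1 hv
        exact Finset.mem_filter.2 ⟨hvV, by omega⟩
      · intro hsup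
        have hne3 : e.1 ≠ a ∨ e.2 ≠ b := by
          by_contra hc; push_neg at hc; exact hne2 (Prod.ext hc.1 hc.2)
        obtain ⟨h3, h4, h5, -, -⟩ := hdiag _ he
        rcases hne3 with h6 | h6
        · have : e.1 ∈ W := Finset.mem_filter.2 ⟨h3, by omega⟩
          have := Finset.mem_filter.1 (hsup this)
          omega
        · have : e.2 ∈ W := Finset.mem_filter.2 ⟨h4, by omega⟩
          have := Finset.mem_filter.1 (hsup this)
          omega
    have := Finset.card_lt_card hss
    have := hmin e he
    omega
  have notouch : ∀ e ∈ T, ¬(a < e.1 ∧ e.1 < b) ∧ ¬(a < e.2 ∧ e.2 < b) := by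
    intro e he
    have hc1 := hnc _ hd _ he
    have hd' := hdiag _ he
    constructor
    · rintro ⟨h1, h2⟩
      by_cases h3 : e.2 ≤ b
      · have := noinside e he (by omega) h3
        rw [Prod.ext_iff] at this
        omega
      · exact hc1 (Or.inl (by simp only []; omega))
    · rintro ⟨h1, h2⟩
      by_cases h3 : a ≤ e.1
      · have := noinside e he h3 (by omega)
        rw [Prod.ext_iff] at this
        omega
      · exact hc1 (Or.inr (by simp only []; omega))
  have hnotin : (a, q) ∉ T := by
    intro h
    exact (notouch _ h).2 ⟨hq1, hq2⟩
  have hS' : ∀ e ∈ insert (a, q) T, DiagV V e := by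
    intro e he
    rcases Finset.mem_insert.1 he with rfl | he
    · exact ⟨haV, hqV, by omega, ⟨p, hpV, by omega⟩, ⟨b, hbV, by omega⟩⟩
    · exact hdiag _ he
  have hnc' : NC (insert (a, q) T) := by
    intro e1 h1 e2 h2
    rcases Finset.mem_insert.1 h1 with rfl | h1 <;> rcases Finset.mem_insert.1 h2 with rfl | h2
    · unfold Cross; omega
    · have := notouch _ h2
      unfold Cross; simp only []; omega
    · have := notouch _ h1
      unfold Cross; simp only []; omega
    · exact hnc _ h1 _ h2
  have := maxcard (insert (a, q) T) V hS' hnc'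
  rw [Finset.card_insert_of_notMem hnotin] at this
  omega




lemma walk (n : ℕ) (τ : ℕ → ℕ) (hb : ∀ i < n, τ i < n)
    (hinj : ∀ i < n, ∀ j < n, τ i = τ j → i = j)
    (hstep : ∀ i, i + 1 < n → τ (i + 1) = τ i + 1 ∨ τ i = τ (i + 1) + 1) :
    (∀ i < n, τ i = i) ∨ (∀ i < n, τ i = n - 1 - i) := by
  rcases Nat.lt_or_ge n 2 with hn | hn
  · left
    intro i hi
    have hi0 : i = 0 := by omega
    subst hi0
    have := hb 0 hi
    omega
  rcases hstep 0 (by omega) with h0 | h0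
  · left
    have key : ∀ i, i + 1 < n → τ (i + 1) = τ i + 1 := by
      intro i
      induction i with
      | zero => intro _; exact h0
      | succ j ih =>
        intro hj
        rcases hstep (j + 1) hj with h | h
        · exact h
        · exfalso
          have hj' := ih (by omega)
          have heq : τ (j + 1 + 1) = τ j := by omega
          have := hinj (j + 1 + 1) (by omega) j (by omega) heq
          omega
    have mono : ∀ i, i < n → τ i = τ 0 + i := by
      intro i
      induction i with
      | zero => intro _; omega
      | succ j ih =>
        intro hj
        have h1 := key j (by omega)
        have h2 := ih (by omega)
        omega
    have hlast := mono (n - 1) (by omega)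
    have hblast := hb (n - 1) (by omega)
    intro i hi
    have := mono i hi
    omega
  · right
    have key : ∀ i, i + 1 < n → τ i = τ (i + 1) + 1 := by
      intro i
      induction i with
      | zero => intro _; exact h0
      | succ j ih =>
        intro hj
        rcases hstep (j + 1) hj with h | h
        · exfalso
          have hj' := ih (by omega)
          have heq : τ (j + 1 + 1) = τ j := by omega
          have := hinj (j + 1 + 1) (by omega) j (by omega) heq
          omega
        · exact h
    have mono : ∀ i, i < n → τ i + i = τ 0 := by
      intro i
      induction i with
      | zero => intro _; omega
      | succ j ih =>
        intro hj
        have h1 := key j (by omega)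
        have h2 := ih (by omega)
        omega
    have hlast := mono (n - 1) (by omega)
    have hb0 := hb 0 (by omega)
    intro i hi
    have := mono i hi
    omega


def Good (V : Finset ℕ) (T : Finset (ℕ × ℕ)) (L : List (ℕ × ℕ)) : Prop :=
  L.Nodup ∧ (∀ d, d ∈ L ↔ d ∈ T) ∧ L.Chain' (ShT V T) ∧
  (∀ i j : ℕ, (hi : i < L.length) → (hj : j < L.length) → i + 1 < j →
    ¬ ShT V T (L[i]'hi) (L[j]'hj)) ∧
  (∀ h0 : 0 < L.length, ShortV V (L[0]'h0)) ∧
  (∀ h0 : 0 < L.length, ShortV V (L[L.length - 1]'(by omega))) ∧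
  (∀ x y : ℕ, AdjV V x y ∨ WrapV V x y → ∃ t, TriV V T t ∧ TriSide t (x, y))


lemma getElem_congr'' {L : List (ℕ × ℕ)} {i j : ℕ} (hi : i < L.length) (hj : j < L.length)
    (h : i = j) : L[i]'hi = L[j]'hj := by subst h; rfl

lemma good_reverse {V : Finset ℕ} {T : Finset (ℕ × ℕ)} {L : List (ℕ × ℕ)}
    (h : Good V T L) : Good V T L.reverse := by
  obtain ⟨h1, h2, h3, h4, h5, h6, h7⟩ := h
  refine ⟨List.nodup_reverse.2 h1, fun d => by rw [List.mem_reverse]; exact h2 d,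
    List.isChain_reverse.2 (h3.imp fun a b hab => shT_symm hab), ?_, ?_, ?_, h7⟩
  · intro i j hi hj hij
    rw [List.length_reverse] at hi hj
    rw [List.getElem_reverse, List.getElem_reverse]
    intro hsh
    exact h4 (L.length - 1 - j) (L.length - 1 - i) (by omega) (by omega) (by omega)
      (shT_symm hsh)
  · intro h0
    rw [List.length_reverse] at h0
    rw [List.getElem_reverse]
    simp only [Nat.sub_zero]
    exact h6 h0
  · intro h0
    rw [List.length_reverse] at h0
    rw [List.getElem_reverse]
    simp only [List.length_reverse, Nat.sub_self]
    exact h5 h0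

lemma split_card (V : Finset ℕ) (x y : ℕ) (hx : x ∈ V) (hy : y ∈ V) (hxy : x < y) :
    (V.filter (fun v => x < v ∧ v < y)).card + (V.filter (fun v => v < x ∨ y < v)).card + 2
      = V.card := by
  set A := V.filter (fun v => x < v ∧ v < y) with hA
  set B := V.filter (fun v => v < x ∨ y < v) with hB
  have hu : A ∪ B ∪ {x, y} = V := by
    ext v
    simp only [hA, hB, Finset.mem_union, Finset.mem_filter, Finset.mem_insert,
      Finset.mem_singleton]
    constructor
    · rintro ((⟨h, -⟩ | ⟨h, -⟩) | h)
      · exact h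
      · exact h
      · rcases h with rfl | rfl
        exacts [hx, hy]
    · intro hv
      by_cases h1 : x < v ∧ v < y
      · exact Or.inl (Or.inl ⟨hv, h1⟩)
      · by_cases h2 : v < x ∨ y < v
        · exact Or.inl (Or.inr ⟨hv, h2⟩)
        · exact Or.inr (by omega)
  have d2 : Disjoint A B := by
    rw [Finset.disjoint_left]
    intro v hv1 hv2
    have := (Finset.mem_filter.1 hv1).2
    have := (Finset.mem_filter.1 hv2).2
    omega
  have d1 : Disjoint (A ∪ B) {x, y} := by
    rw [Finset.disjoint_left]
    intro v hv1 hv2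
    simp only [Finset.mem_insert, Finset.mem_singleton] at hv2
    rcases Finset.mem_union.1 hv1 with h | h <;> have := (Finset.mem_filter.1 h).2 <;> omega
  have c2 : ({x, y} : Finset ℕ).card = 2 := by
    rw [Finset.card_insert_of_notMem (by simp; omega), Finset.card_singleton]
  calc A.card + B.card + 2 = (A ∪ B).card + ({x, y} : Finset ℕ).card := by
        rw [Finset.card_union_of_disjoint d2, c2]
  _ = (A ∪ B ∪ {x, y}).card := (Finset.card_union_of_disjoint d1).symm
  _ = V.card := by rw [hu]

lemma short_of_card5 {V : Finset ℕ} {e : ℕ × ℕ} (hV : V.card = 5) (hd : DiagV V e) :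
    ShortV V e := by
  obtain ⟨hxV, hyV, hxy, ⟨w, hwV, hw⟩, ⟨u, huV, hu⟩⟩ := hd
  have hsc := split_card V e.1 e.2 hxV hyV hxy
  have hA : 0 < (V.filter (fun v => e.1 < v ∧ v < e.2)).card :=
    Finset.card_pos.2 ⟨w, Finset.mem_filter.2 ⟨hwV, hw⟩⟩
  have hB : 0 < (V.filter (fun v => v < e.1 ∨ e.2 < v)).card :=
    Finset.card_pos.2 ⟨u, Finset.mem_filter.2 ⟨huV, hu⟩⟩
  unfold ShortV
  omega

lemma SL_base (V : Finset ℕ) (T : Finset (ℕ × ℕ)) (hV : V.card = 4) (hT1 : T.card = 1)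
    (hdiag : ∀ d ∈ T, DiagV V d) : ∃ L, Good V T L := by
  obtain ⟨d, hTd⟩ := Finset.card_eq_one.1 hT1
  subst hTd
  have hd : DiagV V d := hdiag d (Finset.mem_singleton_self d)
  obtain ⟨hxV, hyV, hxy, ⟨w, hwV, hw1, hw2⟩, ⟨u, huV, hu⟩⟩ := hd
  have hsc := split_card V d.1 d.2 hxV hyV hxy
  set A := V.filter (fun v => d.1 < v ∧ v < d.2) with hA
  set B := V.filter (fun v => v < d.1 ∨ d.2 < v) with hB
  have hwA : w ∈ A := Finset.mem_filter.2 ⟨hwV, hw1, hw2⟩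
  have huB : u ∈ B := Finset.mem_filter.2 ⟨huV, hu⟩
  have hA1 : A.card = 1 ∧ B.card = 1 := by
    have := Finset.card_pos.2 ⟨w, hwA⟩
    have := Finset.card_pos.2 ⟨u, huB⟩
    omega
  have hAw : A = {w} := by
    obtain ⟨z, hz⟩ := Finset.card_eq_one.1 hA1.1
    rw [hz] at hwA ⊢
    rw [Finset.mem_singleton.1 hwA]
  have hBu : B = {u} := by
    obtain ⟨z, hz⟩ := Finset.card_eq_one.1 hA1.2
    rw [hz] at huB ⊢
    rw [Finset.mem_singleton.1 huB]
  have hVmem : ∀ v ∈ V, v = d.1 ∨ v = d.2 ∨ v = w ∨ v = u := by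
    intro v hv
    by_cases h1 : d.1 < v ∧ v < d.2
    · have : v ∈ A := Finset.mem_filter.2 ⟨hv, h1⟩
      rw [hAw, Finset.mem_singleton] at this
      tauto
    · by_cases h2 : v < d.1 ∨ d.2 < v
      · have : v ∈ B := Finset.mem_filter.2 ⟨hv, h2⟩
        rw [hBu, Finset.mem_singleton] at this
        tauto
      · omega
  have hmemA : ∀ v ∈ V, d.1 < v → v < d.2 → v = w := by
    intro v hv h1 h2
    have : v ∈ A := Finset.mem_filter.2 ⟨hv, h1, h2⟩
    rw [hAw, Finset.mem_singleton] at this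
    exact this
  have hmemB : ∀ v ∈ V, (v < d.1 ∨ d.2 < v) → v = u := by
    intro v hv h1
    have : v ∈ B := Finset.mem_filter.2 ⟨hv, h1⟩
    rw [hBu, Finset.mem_singleton] at this
    exact this
  have hdT : (d.1, d.2) ∈ ({d} : Finset (ℕ × ℕ)) := by
    rw [Prod.mk.eta]; exact Finset.mem_singleton_self d
  have hadj1 : AdjV V d.1 w :=
    ⟨hxV, hwV, hw1, fun v hv hh => by have := hmemA v hv hh.1 (by omega); omega⟩
  have hadj2 : AdjV V w d.2 :=
    ⟨hwV, hyV, hw2, fun v hv hh => by have := hmemA v hv (by omega) hh.2; omega⟩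
  have ht1 : TriV V {d} (d.1, w, d.2) :=
    ⟨hw1, hw2, Or.inr (Or.inl hadj1), Or.inr (Or.inl hadj2), Or.inl hdT⟩
  refine ⟨[d], by simp, fun e => by simp, List.isChain_singleton d, ?_, ?_, ?_, ?_⟩
  · intro i j hi hj hij
    simp only [List.length_singleton] at hi hj
    omega
  · intro h0
    exact Or.inl hA1.1
  · intro h0
    exact Or.inl hA1.1
  · rcases hu with hu | hu
    · -- u < d.1 : second triangle (u, d.1, d.2)
      have hadj3 : AdjV V u d.1 :=
        ⟨huV, hxV, hu, fun v hv hh => by have := hmemB v hv (Or.inl (by omega)); omega⟩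
      have hwr : WrapV V u d.2 := by
        refine ⟨huV, hyV, by omega, fun v hv hh => ?_, fun v hv hh => ?_⟩
        · have := hmemB v hv (Or.inl (by omega)); omega
        · have := hmemB v hv (Or.inr (by omega)); omega
      have ht2 : TriV V {d} (u, d.1, d.2) :=
        ⟨hu, hxy, Or.inr (Or.inl hadj3), Or.inl hdT, Or.inr (Or.inr hwr)⟩
      intro p q hpq
      rcases hpq with ⟨hp, hq, hpq', hcond⟩ | ⟨hp, hq, hpq', hlo, hhi⟩
      · rcases hVmem p hp with rfl | rfl | rfl | rfl <;>
          rcases hVmem q hq with rfl | rfl | rfl | rfl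
        · omega
        · exact absurd ⟨hw1, hw2⟩ (hcond w hwV)
        · exact ⟨_, ht1, Or.inl rfl⟩
        · omega
        · omega
        · omega
        · omega
        · omega
        · omega
        · exact ⟨_, ht1, Or.inr (Or.inl rfl)⟩
        · omega
        · omega
        · exact ⟨_, ht2, Or.inl rfl⟩
        · exact absurd ⟨hu, hxy⟩ (hcond d.1 hxV)
        · exact absurd ⟨hu, hw1⟩ (hcond d.1 hxV)
        · omega
      · have hpu : p = u := by
          rcases hVmem p hp with rfl | rfl | rfl | rfl
          · exact absurd hu (hlo u huV)
          · exact absurd (by omega) (hlo u huV)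
          · exact absurd (by omega) (hlo u huV)
          · rfl
        subst hpu
        have hqy : q = d.2 := by
          rcases hVmem q hq with rfl | rfl | rfl | rfl
          · exact absurd hxy (hhi d.2 hyV)
          · rfl
          · exact absurd hw2 (hhi d.2 hyV)
          · omega
        subst hqy
        exact ⟨_, ht2, Or.inr (Or.inr rfl)⟩
    · -- d.2 < u : second triangle (d.1, d.2, u)
      have hadj3 : AdjV V d.2 u :=
        ⟨hyV, huV, hu, fun v hv hh => by have := hmemB v hv (Or.inr (by omega)); omega⟩
      have hwr : WrapV V d.1 u := by
        refine ⟨hxV, huV, by omega, fun v hv hh => ?_, fun v hv hh => ?_⟩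
        · have := hmemB v hv (Or.inl (by omega)); omega
        · have := hmemB v hv (Or.inr (by omega)); omega
      have ht2 : TriV V {d} (d.1, d.2, u) :=
        ⟨hxy, hu, Or.inl hdT, Or.inr (Or.inl hadj3), Or.inr (Or.inr hwr)⟩
      intro p q hpq
      rcases hpq with ⟨hp, hq, hpq', hcond⟩ | ⟨hp, hq, hpq', hlo, hhi⟩
      · rcases hVmem p hp with rfl | rfl | rfl | rfl <;>
          rcases hVmem q hq with rfl | rfl | rfl | rfl
        · omega
        · exact absurd ⟨hw1, hw2⟩ (hcond w hwV)
        · exact ⟨_, ht1, Or.inl rfl⟩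
        · exact absurd ⟨hw1, by omega⟩ (hcond w hwV)
        · omega
        · omega
        · omega
        · exact ⟨_, ht2, Or.inr (Or.inl rfl)⟩
        · omega
        · exact ⟨_, ht1, Or.inr (Or.inl rfl)⟩
        · omega
        · exact absurd ⟨hw2, by omega⟩ (hcond d.2 hyV)
        · omega
        · omega
        · omega
        · omega
      · have hpx : p = d.1 := by
          rcases hVmem p hp with rfl | rfl | rfl | rfl
          · rfl
          · exact absurd hxy (hlo d.1 hxV)
          · exact absurd hw1 (hlo d.1 hxV)
          · exact absurd (by omega) (hlo d.1 hxV)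
        subst hpx
        have hqu : q = u := by
          rcases hVmem q hq with rfl | rfl | rfl | rfl
          · omega
          · exact absurd hu (hhi u huV)
          · exact absurd (by omega) (hhi u huV)
          · rfl
        subst hqu
        exact ⟨_, ht2, Or.inr (Or.inr rfl)⟩


lemma extend {V : Finset ℕ} {T : Finset (ℕ × ℕ)} {a b m : ℕ}
    (hdiag : ∀ d ∈ T, DiagV V d) (hnc : NC T) (htf : TriangleFree T)
    (hab : (a, b) ∈ T) (hm : V.filter (fun v => a < v ∧ v < b) = {m})
    (L' : List (ℕ × ℕ)) (hg : Good (V.erase m) (T.erase (a, b)) L')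
    (hlen : 0 < L'.length)
    (sh0 : ShT V T (a, b) (L'[0]'hlen))
    (hfb : L'.length = 1 → ∀ e ∈ T.erase (a, b), ShortV V e) :
    Good V T ((a, b) :: L') := by
  obtain ⟨nodup', mem', chain', far', short0', shortl', cover'⟩ := hg
  obtain ⟨hmV, ham, hmb⟩ := ear_mem hm
  obtain ⟨haV, hbV, hab', -, -⟩ := hdiag _ hab
  simp only at haV hbV hab'
  have sh_lift : ∀ {d e : ℕ × ℕ}, ShT (V.erase m) (T.erase (a, b)) d e → ShT V T d e := by
    rintro d e ⟨t, ht, h1, h2⟩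
    exact ⟨t, tri_lift hdiag hab hm t ht, h1, h2⟩
  have habL : (a, b) ∉ L' := fun h => (Finset.mem_erase.1 ((mem' _).1 h)).1 rfl
  have hmemT : ∀ d, d ∈ T ↔ d = (a, b) ∨ d ∈ T.erase (a, b) := by
    intro d
    constructor
    · intro hd
      by_cases h : d = (a, b)
      · exact Or.inl h
      · exact Or.inr (Finset.mem_erase.2 ⟨h, hd⟩)
    · rintro (rfl | h)
      · exact hab
      · exact Finset.mem_of_mem_erase h
  refine ⟨List.nodup_cons.2 ⟨habL, nodup'⟩, ?_, ?_, ?_, ?_, ?_, ?_⟩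
  · intro d
    rw [List.mem_cons, hmemT d, mem']
  · refine List.isChain_cons.2 ⟨?_, chain'.imp fun d e h => sh_lift h⟩
    intro y hy
    have h0 : L'.head? = some (L'[0]'hlen) := by
      rw [List.head?_eq_getElem?, List.getElem?_eq_getElem hlen]
    rw [h0, Option.mem_some_iff] at hy
    exact hy ▸ sh0
  · intro i j hi hj hij
    simp only [List.length_cons] at hi hj
    obtain ⟨j', rfl⟩ : ∃ j', j = j' + 1 := ⟨j - 1, by omega⟩
    rw [List.getElem_cons_succ]
    rcases i with - | i'
    · rw [List.getElem_cons_zero]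
      intro hsh
      have hjT' : L'[j'] ∈ T.erase (a, b) := (mem' _).1 (L'.getElem_mem (by omega))
      have h0T' : L'[0]'hlen ∈ T.erase (a, b) := (mem' _).1 (L'.getElem_mem hlen)
      have := earU hdiag hnc htf hab hm (Finset.mem_of_mem_erase hjT')
        (Finset.mem_of_mem_erase h0T') (Finset.mem_erase.1 hjT').1
        (Finset.mem_erase.1 h0T').1 hsh sh0
      have := (nodup'.getElem_inj_iff).1 this
      omega
    · rw [List.getElem_cons_succ]
      intro hsh
      have hiT' : L'[i'] ∈ T.erase (a, b) := (mem' _).1 (L'.getElem_mem (by omega))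
      have hjT' : L'[j'] ∈ T.erase (a, b) := (mem' _).1 (L'.getElem_mem (by omega))
      exact far' i' j' (by omega) (by omega) (by omega)
        (tri_drop hdiag hnc hab hm hiT' hjT' hsh)
  · intro h0
    rw [List.getElem_cons_zero]
    left
    have : V.filter (fun v => ((a, b) : ℕ × ℕ).1 < v ∧ v < ((a, b) : ℕ × ℕ).2) = {m} := hm
    rw [this, Finset.card_singleton]
  · intro h0
    simp only [List.length_cons, Nat.add_sub_cancel]
    obtain ⟨l', hl⟩ : ∃ l', L'.length = l' + 1 := ⟨L'.length - 1, by omega⟩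
    simp only [hl, List.getElem_cons_succ]
    by_cases hS : ShortV V (L'[l']'(by omega))
    · exact hS
    exfalso
    have hlT' : L'[l']'(by omega) ∈ T.erase (a, b) := (mem' _).1 (L'.getElem_mem (by omega))
    have h0T' : L'[0]'hlen ∈ T.erase (a, b) := (mem' _).1 (L'.getElem_mem hlen)
    have hsl := shortl' hlen
    rw [getElem_congr'' (by omega) (by omega) (show L'.length - 1 = l' by omega)] at hsl
    have hbs := badshort hdiag hnc hab hm hlT' hsl hS
    have := earU hdiag hnc htf hab hm (Finset.mem_of_mem_erase hlT')
      (Finset.mem_of_mem_erase h0T') (Finset.mem_erase.1 hlT').1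
      (Finset.mem_erase.1 h0T').1 hbs sh0
    have hl0 := (nodup'.getElem_inj_iff).1 this
    have hlen1 : L'.length = 1 := by omega
    exact hS (hfb hlen1 _ hlT')
  · intro p q hpq
    rcases hpq with hadj | hwr
    · obtain ⟨hp, hq, hpq', hcond⟩ := hadj
      by_cases hqm : q = m
      · have hpa : p = a := by
          rcases lt_trichotomy p a with hl | hc | hl
          · exact absurd ⟨hl, by omega⟩ (hcond a haV)
          · exact hc
          · have := ear_uniq hm p hp hl (by omega)
            omega
        exact ⟨(a, m, b), eartri hdiag hab hm, Or.inl (Prod.ext hpa hqm)⟩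
      by_cases hpm : p = m
      · have hqb : q = b := by
          rcases lt_trichotomy q b with hl | hc | hl
          · have := ear_uniq hm q hq (by omega) hl
            omega
          · exact hc
          · exact absurd ⟨by omega, hl⟩ (hcond b hbV)
        exact ⟨(a, m, b), eartri hdiag hab hm, Or.inr (Or.inl (Prod.ext hpm hqb))⟩
      · have hadj' : AdjV (V.erase m) p q :=
          ⟨Finset.mem_erase.2 ⟨hpm, hp⟩, Finset.mem_erase.2 ⟨hqm, hq⟩, hpq',
            fun v hv => hcond v (Finset.mem_of_mem_erase hv)⟩
        obtain ⟨t, ht, hside⟩ := cover' p q (Or.inl hadj')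
        exact ⟨t, tri_lift hdiag hab hm t ht, hside⟩
    · obtain ⟨hp, hq, hpq', hlo, hhi⟩ := hwr
      have hpm : p ≠ m := by
        rintro rfl
        exact hlo a haV ham
      have hqm : q ≠ m := by
        rintro rfl
        exact hhi b hbV hmb
      have hwr' : WrapV (V.erase m) p q :=
        ⟨Finset.mem_erase.2 ⟨hpm, hp⟩, Finset.mem_erase.2 ⟨hqm, hq⟩, hpq',
          fun v hv => hlo v (Finset.mem_of_mem_erase hv),
          fun v hv => hhi v (Finset.mem_of_mem_erase hv)⟩
      obtain ⟨t, ht, hside⟩ := cover' p q (Or.inr hwr')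
      exact ⟨t, tri_lift hdiag hab hm t ht, hside⟩


lemma SL : ∀ n : ℕ, 4 ≤ n → ∀ (V : Finset ℕ) (T : Finset (ℕ × ℕ)), V.card = n →
    T.card = n - 3 → (∀ d ∈ T, DiagV V d) → NC T → TriangleFree T →
    ∃ L, Good V T L := by
  intro n hn
  induction n, hn using Nat.le_induction with
  | base =>
    intro V T hV hT hdiag hnc htf
    exact SL_base V T hV (by omega) hdiag
  | succ n hn ih =>
    intro V T hV hT hdiag hnc htf
    obtain ⟨a, b, m, hab, hm⟩ := ear_exists V T (by omega) (by omega) hdiag hnc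
    obtain ⟨hmV, ham, hmb⟩ := ear_mem hm
    obtain ⟨haV, hbV, hab', -, -⟩ := hdiag _ hab
    simp only at haV hbV hab'
    have hV'c : (V.erase m).card = n := by rw [Finset.card_erase_of_mem hmV]; omega
    have hT'c : (T.erase (a, b)).card = n - 3 := by
      rw [Finset.card_erase_of_mem hab]; omega
    have hdiag' : ∀ d ∈ T.erase (a, b), DiagV (V.erase m) d := diagV' hdiag hnc hab hm
    have hnc' : NC (T.erase (a, b)) := nc_subset (Finset.erase_subset _ _) hnc
    have htf' : TriangleFree (T.erase (a, b)) := by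
      rintro ⟨x, y, z, h1, h2, h3, h4, h5⟩
      exact htf ⟨x, y, z, h1, h2, Finset.mem_of_mem_erase h3, Finset.mem_of_mem_erase h4,
        Finset.mem_of_mem_erase h5⟩
    obtain ⟨L', hg⟩ := ih (V.erase m) (T.erase (a, b)) hV'c hT'c hdiag' hnc' htf'
    obtain ⟨nodup', mem', chain', far', short0', shortl', cover'⟩ := hg
    have hlen' : L'.length = n - 3 := by
      have h1 : L'.toFinset = T.erase (a, b) := Finset.ext fun d => by
        rw [List.mem_toFinset]; exact mem' d
      have h2 := List.toFinset_card_of_nodup nodup'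
      rw [h1, hT'c] at h2; omega
    have hlen0 : 0 < L'.length := by omega
    have hadjab : AdjV (V.erase m) a b := by
      refine ⟨Finset.mem_erase.2 ⟨by omega, haV⟩, Finset.mem_erase.2 ⟨by omega, hbV⟩, hab', ?_⟩
      rintro v hv ⟨h1, h2⟩
      obtain ⟨hvm, hvV⟩ := Finset.mem_erase.1 hv
      exact hvm (ear_uniq hm v hvV h1 h2)
    obtain ⟨t0, ht0, hside0⟩ := cover' a b (Or.inl hadjab)
    obtain ⟨p, q, r⟩ := t0
    have ht0' := ht0
    obtain ⟨hpq, hqr, s1, s2, s3⟩ := ht0'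
    have hvert := triV_mem hdiag' ht0
    simp only at hvert
    have hchord : ∃ e0 ∈ T.erase (a, b), TriSide (p, q, r) e0 := by
      by_cases c1 : (p, q) ∈ T.erase (a, b)
      · exact ⟨_, c1, Or.inl rfl⟩
      by_cases c2 : (q, r) ∈ T.erase (a, b)
      · exact ⟨_, c2, Or.inr (Or.inl rfl)⟩
      by_cases c3 : (p, r) ∈ T.erase (a, b)
      · exact ⟨_, c3, Or.inr (Or.inr rfl)⟩
      exfalso
      have ha1 : AdjV (V.erase m) p q := by
        rcases s1 with h | h | h
        · exact absurd h c1
        · exact h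
        · exact absurd hqr (h.2.2.2.2 r hvert.2.2)
      have ha2 : AdjV (V.erase m) q r := by
        rcases s2 with h | h | h
        · exact absurd h c2
        · exact h
        · exact absurd hpq (h.2.2.2.1 p hvert.1)
      have hw3 : WrapV (V.erase m) p r := by
        rcases s3 with h | h | h
        · exact absurd h c3
        · exact absurd ⟨hpq, hqr⟩ (h.2.2.2 q hvert.2.1)
        · exact h
      have hsub : V.erase m ⊆ {p, q, r} := by
        intro v hv
        simp only [Finset.mem_insert, Finset.mem_singleton]
        have n1 := ha1.2.2.2 v hv
        have n2 := ha2.2.2.2 v hv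
        have n3 := hw3.2.2.2.1 v hv
        have n4 := hw3.2.2.2.2 v hv
        omega
      have h3 : ({p, q, r} : Finset ℕ).card ≤ 3 := by
        apply (Finset.card_insert_le _ _).trans
        apply Nat.succ_le_succ
        apply (Finset.card_insert_le _ _).trans
        simp
      have := Finset.card_le_card hsub
      omega
    obtain ⟨e0, he0T', hside_e0⟩ := hchord
    have sh0 : ShT V T (a, b) e0 := ⟨(p, q, r), tri_lift hdiag hab hm _ ht0, hside0, hside_e0⟩
    obtain ⟨i0, hi0, he0⟩ := List.mem_iff_getElem.1 ((mem' e0).2 he0T')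
    have hfb : L'.length = 1 → ∀ e ∈ T.erase (a, b), ShortV V e := by
      intro h1 e he
      have hV5 : V.card = 5 := by omega
      exact short_of_card5 hV5 (hdiag e (Finset.mem_of_mem_erase he))
    have sh_lift : ∀ {d e : ℕ × ℕ}, ShT (V.erase m) (T.erase (a, b)) d e → ShT V T d e := by
      rintro d e ⟨t, ht, h1, h2⟩
      exact ⟨t, tri_lift hdiag hab hm t ht, h1, h2⟩
    have hchainget := List.isChain_iff_getElem.1 chain'
    have hi0cases : i0 = 0 ∨ i0 = L'.length - 1 := by
      by_contra hc
      push_neg at hc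
      have hm1 : 0 < i0 := by omega
      have hp1 : i0 + 1 < L'.length := by omega
      have c1 : ShT (V.erase m) (T.erase (a, b)) (L'[i0 - 1]'(by omega)) (L'[i0]'hi0) := by
        have := hchainget (i0 - 1) (by omega)
        rwa [getElem_congr'' (by omega) hi0 (by omega : i0 - 1 + 1 = i0)] at this
      have c2 : ShT (V.erase m) (T.erase (a, b)) (L'[i0]'hi0) (L'[i0 + 1]'hp1) := by
        have := hchainget i0 (by omega)
        exact this
      have hmem1 : L'[i0 - 1]'(by omega) ∈ T.erase (a, b) := (mem' _).1 (L'.getElem_mem _)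
      have hmem2 : L'[i0 + 1]'hp1 ∈ T.erase (a, b) := (mem' _).1 (L'.getElem_mem _)
      have hne12 : L'[i0 - 1]'(by omega) ≠ L'[i0 + 1]'hp1 := by
        intro h
        have := (nodup'.getElem_inj_iff).1 h
        omega
      have hne1d : L'[i0 - 1]'(by omega) ≠ e0 := by
        rw [← he0]
        intro h
        have := (nodup'.getElem_inj_iff).1 h
        omega
      have hne2d : L'[i0 + 1]'hp1 ≠ e0 := by
        rw [← he0]
        intro h
        have := (nodup'.getElem_inj_iff).1 h
        omega
      have hne3 : (a, b) ≠ e0 := by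
        intro h
        exact (Finset.mem_erase.1 he0T').1 h.symm
      have hs1 : ShT V T e0 (L'[i0 - 1]'(by omega)) := by
        rw [← he0]
        exact shT_symm (sh_lift c1)
      have hs2 : ShT V T e0 (L'[i0 + 1]'hp1) := by
        rw [← he0]
        exact sh_lift c2
      exact deg2 hdiag hnc htf (Finset.mem_of_mem_erase he0T')
        (Finset.mem_of_mem_erase hmem1) (Finset.mem_of_mem_erase hmem2) hab
        hne12 (Finset.mem_erase.1 hmem1).1 (Finset.mem_erase.1 hmem2).1
        hne1d hne2d hne3 hs1 hs2 (shT_symm sh0)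
    rcases hi0cases with h0 | h0
    · have hL0 : L'[0]'hlen0 = e0 := by
        rw [getElem_congr'' hlen0 hi0 h0.symm]; exact he0
      have sh0' : ShT V T (a, b) (L'[0]'hlen0) := by rw [hL0]; exact sh0
      exact ⟨(a, b) :: L', extend hdiag hnc htf hab hm L'
        ⟨nodup', mem', chain', far', short0', shortl', cover'⟩ hlen0 sh0' hfb⟩
    · have hgr := good_reverse (⟨nodup', mem', chain', far', short0', shortl', cover'⟩ :
        Good (V.erase m) (T.erase (a, b)) L')
      have hlenr : 0 < L'.reverse.length := by rw [List.length_reverse]; omega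
      have sh0'' : ShT V T (a, b) (L'.reverse[0]'hlenr) := by
        rw [List.getElem_reverse]
        rw [getElem_congr'' (by omega) hi0 (by omega)]
        rw [he0]; exact sh0
      refine ⟨(a, b) :: L'.reverse, extend hdiag hnc htf hab hm L'.reverse hgr hlenr sh0'' ?_⟩
      rw [List.length_reverse]; exact hfb


-- translation lemmas
lemma diag_range {k : ℕ} {d : ℕ × ℕ} (h : IsDiag k d) : DiagV (Finset.range k) d := by
  obtain ⟨h1, h2, h3, h4⟩ := h
  refine ⟨Finset.mem_range.2 (by omega), Finset.mem_range.2 h2, h1,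
    ⟨d.1 + 1, Finset.mem_range.2 (by omega), by omega, by omega⟩, ?_⟩
  by_cases h5 : d.1 = 0
  · exact ⟨k - 1, Finset.mem_range.2 (by omega), by omega⟩
  · exact ⟨0, Finset.mem_range.2 (by omega), by omega⟩

lemma adj_range {k x y : ℕ} : AdjV (Finset.range k) x y ↔ y = x + 1 ∧ y < k := by
  constructor
  · rintro ⟨hx, hy, hxy, hcond⟩
    rw [Finset.mem_range] at hx hy
    refine ⟨?_, hy⟩
    by_contra hc
    exact hcond (x + 1) (Finset.mem_range.2 (by omega)) (by omega)
  · rintro ⟨rfl, hy⟩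
    exact ⟨Finset.mem_range.2 (by omega), Finset.mem_range.2 hy, by omega,
      fun v hv hh => by omega⟩

lemma wrap_range {k x y : ℕ} (hk : 0 < k) :
    WrapV (Finset.range k) x y ↔ x = 0 ∧ y = k - 1 ∧ 0 < k - 1 := by
  constructor
  · rintro ⟨hx, hy, hxy, hlo, hhi⟩
    rw [Finset.mem_range] at hx hy
    have hx0 : x = 0 := by
      by_contra hc
      exact hlo 0 (Finset.mem_range.2 hk) (by omega)
    have hyk : y = k - 1 := by
      by_contra hc
      exact hhi (k - 1) (Finset.mem_range.2 (by omega)) (by omega)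
    exact ⟨hx0, hyk, by omega⟩
  · rintro ⟨rfl, rfl, h1⟩
    exact ⟨Finset.mem_range.2 hk, Finset.mem_range.2 (by omega), by omega,
      fun v hv hh => by omega, fun v hv hh => by rw [Finset.mem_range] at hv; omega⟩

lemma side_snd_lt {k : ℕ} {T : Finset (ℕ × ℕ)} (hd : ∀ d ∈ T, IsDiag k d) {p : ℕ × ℕ}
    (h : SideV (Finset.range k) T p) : p.2 < k := by
  rcases h with h | h | h
  · exact (hd _ h).2.1
  · exact Finset.mem_range.1 h.2.1
  · exact Finset.mem_range.1 h.2.1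

lemma tri_iff {k : ℕ} {T : Finset (ℕ × ℕ)} (hd : ∀ d ∈ T, IsDiag k d) (hk : 0 < k)
    (t : ℕ × ℕ × ℕ) : TriV (Finset.range k) T t ↔ IsTri k T t := by
  constructor
  · rintro ⟨h1, h2, s1, s2, s3⟩
    have hlt : t.2.2 < k := side_snd_lt hd s2
    have key : ∀ p : ℕ × ℕ, SideV (Finset.range k) T p → SideOk k T p := by
      rintro p (h | h | h)
      · exact Or.inl h
      · exact Or.inr (Or.inl (adj_range.1 h).1)
      · obtain ⟨h3, h4, -⟩ := (wrap_range hk).1 h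
        exact Or.inr (Or.inr ⟨h3, h4⟩)
    exact ⟨h1, h2, hlt, key _ s1, key _ s2, key _ s3⟩
  · rintro ⟨h1, h2, h3, s1, s2, s3⟩
    have key : ∀ p : ℕ × ℕ, p.1 < p.2 → p.2 < k → SideOk k T p →
        SideV (Finset.range k) T p := by
      rintro p hp1 hp2 (h | h | h)
      · exact Or.inl h
      · exact Or.inr (Or.inl (adj_range.2 ⟨h, hp2⟩))
      · exact Or.inr (Or.inr ((wrap_range hk).2 ⟨h.1, h.2, by omega⟩))
    exact ⟨h1, h2, key _ h1 (by omega) s1, key _ h2 h3 s2, key _ (by omega) h3 s3⟩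

lemma short_range {k : ℕ} {d : ℕ × ℕ} (hdg : IsDiag k d)
    (h : ShortV (Finset.range k) d) : IsShort k d := by
  obtain ⟨h1, h2, h3, h4⟩ := hdg
  rcases h with h | h
  · left
    have he : (Finset.range k).filter (fun v => d.1 < v ∧ v < d.2) = Finset.Ioo d.1 d.2 := by
      ext v
      simp only [Finset.mem_filter, Finset.mem_range, Finset.mem_Ioo]
      omega
    rw [he, Nat.card_Ioo] at h
    omega
  · right
    have he : (Finset.range k).filter (fun v => v < d.1 ∨ d.2 < v)
        = Finset.range d.1 ∪ Finset.Ioo d.2 k := by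
      ext v
      simp only [Finset.mem_filter, Finset.mem_range, Finset.mem_union, Finset.mem_Ioo]
      omega
    have hdisj : Disjoint (Finset.range d.1) (Finset.Ioo d.2 k) := by
      rw [Finset.disjoint_left]
      intro v hv1 hv2
      rw [Finset.mem_range] at hv1
      rw [Finset.mem_Ioo] at hv2
      omega
    rw [he, Finset.card_union_of_disjoint hdisj, Finset.card_range, Nat.card_Ioo] at h
    omega

end TF12

open TF12 in
theorem stmt12 (k : ℕ) (hk : 5 ≤ k) (T : Finset (ℕ × ℕ)) (hT : IsTriangulation k T)
    (hTF : TriangleFree T) :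
    ∃ f g : {d // d ∈ T} ≃ Fin (k - 3), f ≠ g ∧ ProperColoring k T f ∧ ProperColoring k T g ∧
      ∀ h : {d // d ∈ T} ≃ Fin (k - 3), ProperColoring k T h → h = f ∨ h = g := by
  letI : BEq (ℕ × ℕ) := instBEqOfDecidableEq
  obtain ⟨hcard, hdiag0, hnc0⟩ := hT
  have hdiag : ∀ d ∈ T, DiagV (Finset.range k) d := fun d hd => diag_range (hdiag0 d hd)
  obtain ⟨L, hg⟩ := SL k (by omega) (Finset.range k) T (Finset.card_range k) hcard hdiag
    hnc0 hTF
  obtain ⟨nodup, mem, chain, far, short0, shortl, -⟩ := hg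
  have hlen : L.length = k - 3 := by
    have h1 : L.toFinset = T := Finset.ext fun d => by rw [List.mem_toFinset]; exact mem d
    have h2 := List.toFinset_card_of_nodup nodup
    rw [h1, hcard] at h2
    omega
  have hlenpos : 0 < L.length := by omega
  have hmemT : ∀ (i : ℕ) (hi : i < L.length), L[i]'hi ∈ T :=
    fun i hi => (mem _).1 (L.getElem_mem hi)
  have hidx : ∀ d : {d // d ∈ T}, L.idxOf d.1 < L.length :=
    fun d => List.idxOf_lt_length_iff.2 ((mem _).2 d.2)
  let f : {d // d ∈ T} ≃ Fin (k - 3) :=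
    { toFun := fun d => ⟨L.idxOf d.1, hlen ▸ hidx d⟩
      invFun := fun i => ⟨L[(i : ℕ)]'(by have := i.2; omega), hmemT _ _⟩
      left_inv := fun d => Subtype.ext (List.getElem_idxOf (hidx d))
      right_inv := fun i => Fin.ext (List.Nodup.idxOf_getElem nodup _ _) }
  let g : {d // d ∈ T} ≃ Fin (k - 3) := f.trans Fin.revPerm
  have hfval : ∀ d : {d // d ∈ T}, (f d : ℕ) = L.idxOf d.1 := fun d => rfl
  have hgval : ∀ d : {d // d ∈ T}, (g d : ℕ) = (k - 3) - (L.idxOf d.1 + 1) :=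
    fun d => rfl
  have hbr : ∀ d e : ℕ × ℕ, (∃ t, IsTri k T t ∧ TriSide t d ∧ TriSide t e) ↔
      ShT (Finset.range k) T d e := by
    intro d e
    constructor
    · rintro ⟨t, ht, h1, h2⟩
      exact ⟨t, (tri_iff hdiag0 (by omega) t).2 ht, h1, h2⟩
    · rintro ⟨t, ht, h1, h2⟩
      exact ⟨t, (tri_iff hdiag0 (by omega) t).1 ht, h1, h2⟩
  have hd1 : ∀ d : {d // d ∈ T}, L[L.idxOf d.1]'(hidx d) = d.1 :=
    fun d => List.getElem_idxOf (hidx d)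
  -- consecutive-index lemma for proper colorings
  have hcons : ∀ d e : {d // d ∈ T}, d ≠ e →
      (∃ t, IsTri k T t ∧ TriSide t d.1 ∧ TriSide t e.1) →
      (L.idxOf e.1 = L.idxOf d.1 + 1 ∨ L.idxOf d.1 = L.idxOf e.1 + 1) := by
    intro d e hne htri
    have hsh := (hbr d.1 e.1).1 htri
    have hij : L.idxOf d.1 ≠ L.idxOf e.1 := by
      intro h
      apply hne
      apply Subtype.ext
      have h1 := hd1 d
      have h2 := hd1 e
      rw [getElem_congr'' (hidx d) (hidx e) h] at h1
      rw [h2] at h1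
      exact h1.symm
    rcases Nat.lt_or_ge (L.idxOf d.1) (L.idxOf e.1) with hlt | hge
    · by_cases hj : L.idxOf e.1 = L.idxOf d.1 + 1
      · exact Or.inl hj
      · exfalso
        apply far (L.idxOf d.1) (L.idxOf e.1) (hidx d) (hidx e) (by omega)
        rw [hd1 d, hd1 e]
        exact hsh
    · by_cases hj : L.idxOf d.1 = L.idxOf e.1 + 1
      · exact Or.inr hj
      · exfalso
        apply far (L.idxOf e.1) (L.idxOf d.1) (hidx e) (hidx d) (by omega)
        rw [hd1 d, hd1 e]
        exact shT_symm hsh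
  have hPf : ProperColoring k T f := by
    constructor
    · intro d hd0
      rw [hfval] at hd0
      have hL0 : L[0]'hlenpos = d.1 := by
        have h1 := hd1 d
        rwa [getElem_congr'' (hidx d) hlenpos hd0] at h1
      have hs := short0 hlenpos
      rw [hL0] at hs
      exact short_range (hdiag0 d.1 d.2) hs
    · intro d e hne htri
      rcases hcons d e hne htri with h | h
      · right; rw [hfval, hfval]; exact h
      · left; rw [hfval, hfval]; exact h
  have hPg : ProperColoring k T g := by
    constructor
    · intro d hd0
      rw [hgval] at hd0
      have hidc : L.idxOf d.1 = L.length - 1 := by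
        have := hidx d
        omega
      have hL0 : L[L.length - 1]'(by omega) = d.1 := by
        have h1 := hd1 d
        rwa [getElem_congr'' (hidx d) (by omega) hidc] at h1
      have hs := shortl hlenpos
      rw [hL0] at hs
      exact short_range (hdiag0 d.1 d.2) hs
    · intro d e hne htri
      have hi := hidx d
      have hj := hidx e
      rcases hcons d e hne htri with h | h
      · left; rw [hgval, hgval]; omega
      · right; rw [hgval, hgval]; omega
  have hfg : f ≠ g := by
    intro h
    set d0 : {d // d ∈ T} := ⟨L[0]'hlenpos, hmemT 0 hlenpos⟩ with hd0
    have h1 : (f d0 : ℕ) = 0 := by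
      rw [hfval]
      exact List.Nodup.idxOf_getElem nodup 0 hlenpos
    have h2 : (g d0 : ℕ) = (k - 3) - 1 := by
      rw [hgval, List.Nodup.idxOf_getElem nodup 0 hlenpos]
    rw [h] at h1
    omega
  refine ⟨f, g, hfg, hPf, hPg, ?_⟩
  intro h hph
  have hτval : ∀ (i : ℕ) (hi : i < L.length),
      (fun i => if hi : i < L.length then (h ⟨L[i]'hi, hmemT i hi⟩ : ℕ) else 0) i
        = (h ⟨L[i]'hi, hmemT i hi⟩ : ℕ) := by
    intro i hi
    simp only [dif_pos hi]
  have hw := walk (k - 3) (fun i => if hi : i < L.length then (h ⟨L[i]'hi, hmemT i hi⟩ : ℕ) else 0)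
    ?_ ?_ ?_
  rotate_left
  · intro i hi
    rw [dif_pos (show i < L.length by omega)]
    exact (h _).2
  · intro i hi j hj heq
    rw [dif_pos (show i < L.length by omega), dif_pos (show j < L.length by omega)] at heq
    have := h.injective (Fin.ext heq)
    rw [Subtype.ext_iff] at this
    exact (nodup.getElem_inj_iff).1 this
  · intro i hi1
    have hi : i < L.length := by omega
    have hi' : i + 1 < L.length := by omega
    have hne : (⟨L[i]'hi, hmemT i hi⟩ : {d // d ∈ T}) ≠ ⟨L[i + 1]'hi', hmemT _ hi'⟩ := by
      intro hc
      rw [Subtype.ext_iff] at hc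
      have := (nodup.getElem_inj_iff).1 hc
      omega
    have hshc : ShT (Finset.range k) T (L[i]'hi) (L[i + 1]'hi') := by
      have := List.isChain_iff_getElem.1 chain i (by omega)
      exact this
    have := hph.2 _ _ hne ((hbr _ _).2 hshc)
    rw [dif_pos hi, dif_pos hi']
    tauto
  rcases hw with hw | hw
  · left
    apply Equiv.ext
    intro d
    have hwd := hw (L.idxOf d.1) (by have := hidx d; omega)
    rw [dif_pos (hidx d)] at hwd
    have hdd : (⟨L[L.idxOf d.1]'(hidx d), hmemT _ _⟩ : {d // d ∈ T}) = d :=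
      Subtype.ext (hd1 d)
    rw [hdd] at hwd
    exact Fin.ext (by rw [hwd, hfval])
  · right
    apply Equiv.ext
    intro d
    have hwd := hw (L.idxOf d.1) (by have := hidx d; omega)
    rw [dif_pos (hidx d)] at hwd
    have hdd : (⟨L[L.idxOf d.1]'(hidx d), hmemT _ _⟩ : {d // d ∈ T}) = d :=
      Subtype.ext (hd1 d)
    rw [hdd] at hwd
    refine Fin.ext ?_
    rw [hwd, hgval]
    have := hidx d
    omega
end
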